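/- arXiv:2301.09139 — 14 statements merged into one kernel-verified Lean document; each statement's English description precedes it below -/
import Mathlib

section
/- Let A be an (associative, not necessarily commutative) algebra over the complex numbers and let (D₁, d₁) and (D₂, d₂) be generalized derivations on A. If the pair (D₁∘D₂, d₁∘d₂) is again a generalized derivation on A, then both maps d₁∘D₂ and d₂∘D₁ send A into the nilradical nil(A) of A. -/
/-- An additive map `d : R → R` with `d (x*y) = d x * y + x * d y` is a derivation. -/
def IsDerivation {R : Type*} [Ring R] (d : R → R) : Prop :=
  (∀ x y, d (x + y) = d x + d y) ∧ (∀ x y, d (x * y) = d x * y + x * d y)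

/-- A generalized derivation `(D, d)`: `D` additive, `d` a derivation, and
`D (x*y) = D x * y + x * d y`. -/
def IsGenDerivation {R : Type*} [Ring R] (D d : R → R) : Prop :=
  (∀ x y, D (x + y) = D x + D y) ∧ IsDerivation d ∧ (∀ x y, D (x * y) = D x * y + x * d y)

/-- A proper two-sided ideal `P` (given as a set) which is prime:
`x R y ⊆ P` implies `x ∈ P` or `y ∈ P`. -/
def IsPrimeTwoSidedIdeal {A : Type*} [Ring A] (P : Set A) : Prop :=
  (0 : A) ∈ P ∧ (∀ x y, x ∈ P → y ∈ P → x + y ∈ P) ∧ (∀ x, x ∈ P → -x ∈ P) ∧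
    (∀ x r, x ∈ P → x * r ∈ P) ∧ (∀ x r, x ∈ P → r * x ∈ P) ∧
    P ≠ Set.univ ∧ (∀ x y : A, (∀ r, x * r * y ∈ P) → x ∈ P ∨ y ∈ P)

/-- The nilradical of `A`: the intersection of all prime two-sided ideals of `A`. -/
def nilRad (A : Type*) [Ring A] : Set A :=
  ⋂ P ∈ {P : Set A | IsPrimeTwoSidedIdeal P}, P

/-- Key "skew pair" lemma: if `μ a * x * ν b + ν a * x * μ b ∈ P` always, for a prime
two-sided ideal `P` of a `ℂ`-algebra, then the image of `μ` or of `ν` lies in `P`. -/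
lemma skewPair {A : Type*} [Ring A] [Algebra ℂ A] {P : Set A}
    (hP : IsPrimeTwoSidedIdeal P) (μ ν : A → A)
    (H : ∀ a x b, μ a * x * ν b + ν a * x * μ b ∈ P) :
    (∀ a, μ a ∈ P) ∨ (∀ a, ν a ∈ P) := by
  obtain ⟨h0, hadd, hneg, hmulr, hmull, -, hprime⟩ := id hP
  have hsub : ∀ a b : A, a ∈ P → b ∈ P → a - b ∈ P := fun a b ha hb => by
    rw [sub_eq_add_neg]; exact hadd _ _ ha (hneg _ hb)
  have hhalf : ∀ a : A, a + a ∈ P → a ∈ P := by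
    intro a ha
    have h2 : (2⁻¹ : ℂ) + 2⁻¹ = 1 := by norm_num
    have key : (algebraMap ℂ A) 2⁻¹ * (a + a) = a := by
      rw [mul_add, ← add_mul, ← map_add, h2, map_one, one_mul]
    rw [← key]; exact hmull _ _ ha
  by_cases hμ : ∀ a, μ a ∈ P
  · exact Or.inl hμ
  push_neg at hμ
  obtain ⟨b', hb'⟩ := hμ
  refine Or.inr ?_
  have key0 : ∀ x y z u x', μ x * y * ν z * u * ν x' - ν x * y * ν z * u * μ x' ∈ P := by
    intro x y z u x'
    have hstep : ∀ v, (μ x * y * ν z * u * ν x' - ν x * y * ν z * u * μ x') * v * μ b' ∈ P := by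
      intro v
      have w1 : μ x * y * ν z * u * (μ x' * v * ν b' + ν x' * v * μ b') ∈ P :=
        hmull _ _ (H x' v b')
      have w2 : μ x * (y * ν z * u * μ x' * v) * ν b' + ν x * (y * ν z * u * μ x' * v) * μ b' ∈ P :=
        H x _ b'
      have e : (μ x * y * ν z * u * ν x' - ν x * y * ν z * u * μ x') * v * μ b'
          = μ x * y * ν z * u * (μ x' * v * ν b' + ν x' * v * μ b')
            - (μ x * (y * ν z * u * μ x' * v) * ν b' + ν x * (y * ν z * u * μ x' * v) * μ b') := by
        noncomm_ring
      rw [e]; exact hsub _ _ w1 w2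
    rcases hprime _ _ hstep with hm | hm
    · exact hm
    · exact absurd hm hb'
  have key1 : ∀ x y z u x', ν x * y * ν z * u * μ x' ∈ P := by
    intro x y z u x'
    apply hhalf
    have hH : μ x * (y * ν z * u) * ν x' + ν x * (y * ν z * u) * μ x' ∈ P := H x _ x'
    have e : ν x * y * ν z * u * μ x' + ν x * y * ν z * u * μ x'
        = (μ x * (y * ν z * u) * ν x' + ν x * (y * ν z * u) * μ x')
          - (μ x * y * ν z * u * ν x' - ν x * y * ν z * u * μ x') := by noncomm_ring
    rw [e]; exact hsub _ _ hH (key0 x y z u x')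
  have key2 : ∀ x y z, ν x * y * ν z ∈ P := by
    intro x y z
    rcases hprime (ν x * y * ν z) (μ b') (fun u => key1 x y z u b') with hm | hm
    · exact hm
    · exact absurd hm hb'
  intro a
  rcases hprime (ν a) (ν a) (fun r => key2 a r a) with hm | hm <;> exact hm

theorem stmt1 {A : Type*} [Ring A] [Algebra ℂ A]
    (D₁ d₁ D₂ d₂ : A → A)
    (h₁ : IsGenDerivation D₁ d₁) (h₂ : IsGenDerivation D₂ d₂)
    (h : IsGenDerivation (fun x => D₁ (D₂ x)) (fun x => d₁ (d₂ x))) :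
    ∀ x : A, d₁ (D₂ x) ∈ nilRad A ∧ d₂ (D₁ x) ∈ nilRad A := by
  obtain ⟨hD₁a, ⟨hd₁a, hd₁m⟩, hD₁m⟩ := h₁
  obtain ⟨hD₂a, ⟨hd₂a, hd₂m⟩, hD₂m⟩ := h₂
  have hdd : ∀ x y : A, d₁ (d₂ (x * y)) = d₁ (d₂ x) * y + x * d₁ (d₂ y) := h.2.1.2
  have hDD : ∀ x y : A, D₁ (D₂ (x * y)) = D₁ (D₂ x) * y + x * d₁ (d₂ y) := h.2.2
  have hd₁0 : d₁ (0 : A) = 0 := by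
    have h' : d₁ (0 : A) + d₁ 0 = d₁ 0 + 0 := by rw [← hd₁a, add_zero, add_zero]
    exact add_left_cancel h'
  have hd₂0 : d₂ (0 : A) = 0 := by
    have h' : d₂ (0 : A) + d₂ 0 = d₂ 0 + 0 := by rw [← hd₂a, add_zero, add_zero]
    exact add_left_cancel h'
  -- basic consequence of `d₁ ∘ d₂` being a derivation
  have diam : ∀ x y : A, d₂ x * d₁ y + d₁ x * d₂ y = 0 := by
    intro x y
    have e1 : d₁ (d₂ (x * y)) = d₁ (d₂ x) * y + x * d₁ (d₂ y) := hdd x y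
    have e2 : d₁ (d₂ (x * y))
        = d₁ (d₂ x) * y + d₂ x * d₁ y + (d₁ x * d₂ y + x * d₁ (d₂ y)) := by
      rw [hd₂m, hd₁a, hd₁m, hd₁m]
    have e3 : d₂ x * d₁ y + d₁ x * d₂ y
        = (d₁ (d₂ x) * y + d₂ x * d₁ y + (d₁ x * d₂ y + x * d₁ (d₂ y)))
          - (d₁ (d₂ x) * y + x * d₁ (d₂ y)) := by abel
    rw [e3, ← e2, ← e1, sub_self]
  -- basic consequence of `(D₁ ∘ D₂, d₁ ∘ d₂)` being a generalized derivation
  have star : ∀ x y : A, D₂ x * d₁ y + D₁ x * d₂ y = 0 := by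
    intro x y
    have e1 : D₁ (D₂ (x * y)) = D₁ (D₂ x) * y + x * d₁ (d₂ y) := hDD x y
    have e2 : D₁ (D₂ (x * y))
        = D₁ (D₂ x) * y + D₂ x * d₁ y + (D₁ x * d₂ y + x * d₁ (d₂ y)) := by
      rw [hD₂m, hD₁a, hD₁m, hD₁m]
    have e3 : D₂ x * d₁ y + D₁ x * d₂ y
        = (D₁ (D₂ x) * y + D₂ x * d₁ y + (D₁ x * d₂ y + x * d₁ (d₂ y)))
          - (D₁ (D₂ x) * y + x * d₁ (d₂ y)) := by abel
    rw [e3, ← e2, ← e1, sub_self]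
  -- three-variable versions
  have E1 : ∀ x y z : A, d₂ x * y * d₁ z + d₁ x * y * d₂ z = 0 := by
    intro x y z
    have e := diam x (y * z)
    rw [hd₁m, hd₂m] at e
    have e2 : (d₂ x * d₁ y + d₁ x * d₂ y) * z = 0 := by rw [diam, zero_mul]
    have e3 : d₂ x * y * d₁ z + d₁ x * y * d₂ z
        = (d₂ x * (d₁ y * z + y * d₁ z) + d₁ x * (d₂ y * z + y * d₂ z))
          - (d₂ x * d₁ y + d₁ x * d₂ y) * z := by noncomm_ring
    rw [e3, e, e2, sub_zero]
  have E2 : ∀ x y z : A, D₂ x * y * d₁ z + D₁ x * y * d₂ z = 0 := by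
    intro x y z
    have e := star x (y * z)
    rw [hd₁m, hd₂m] at e
    have e2 : (D₂ x * d₁ y + D₁ x * d₂ y) * z = 0 := by rw [star, zero_mul]
    have e3 : D₂ x * y * d₁ z + D₁ x * y * d₂ z
        = (D₂ x * (d₁ y * z + y * d₁ z) + D₁ x * (d₂ y * z + y * d₂ z))
          - (D₂ x * d₁ y + D₁ x * d₂ y) * z := by noncomm_ring
    rw [e3, e, e2, sub_zero]
  -- apply d₁ resp. d₂ to E1 resp. E2
  have E3 : ∀ x y z : A, d₁ (d₂ x) * y * d₁ z + d₂ x * y * d₁ (d₁ z)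
      + d₁ (d₁ x) * y * d₂ z + d₁ x * y * d₁ (d₂ z) = 0 := by
    intro x y z
    have e0 : d₁ (d₂ x * y * d₁ z + d₁ x * y * d₂ z) = 0 := by rw [E1, hd₁0]
    have e3 : d₁ (d₂ x) * y * d₁ z + d₂ x * y * d₁ (d₁ z)
        + d₁ (d₁ x) * y * d₂ z + d₁ x * y * d₁ (d₂ z)
        = d₁ (d₂ x * y * d₁ z + d₁ x * y * d₂ z)
          - (d₂ x * d₁ y * d₁ z + d₁ x * d₁ y * d₂ z) := by
      simp only [hd₁a, hd₁m]; noncomm_ring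
    rw [e3, e0, E1 x (d₁ y) z, sub_zero]
  have E4 : ∀ x y z : A, d₁ (D₂ x) * y * d₁ z + D₂ x * y * d₁ (d₁ z)
      + d₁ (D₁ x) * y * d₂ z + D₁ x * y * d₁ (d₂ z) = 0 := by
    intro x y z
    have e0 : d₁ (D₂ x * y * d₁ z + D₁ x * y * d₂ z) = 0 := by rw [E2, hd₁0]
    have e3 : d₁ (D₂ x) * y * d₁ z + D₂ x * y * d₁ (d₁ z)
        + d₁ (D₁ x) * y * d₂ z + D₁ x * y * d₁ (d₂ z)
        = d₁ (D₂ x * y * d₁ z + D₁ x * y * d₂ z)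
          - (D₂ x * d₁ y * d₁ z + D₁ x * d₁ y * d₂ z) := by
      simp only [hd₁a, hd₁m]; noncomm_ring
    rw [e3, e0, E2 x (d₁ y) z, sub_zero]
  have E5 : ∀ x y z : A, d₂ (d₂ x) * y * d₁ z + d₂ x * y * d₂ (d₁ z)
      + d₂ (d₁ x) * y * d₂ z + d₁ x * y * d₂ (d₂ z) = 0 := by
    intro x y z
    have e0 : d₂ (d₂ x * y * d₁ z + d₁ x * y * d₂ z) = 0 := by rw [E1, hd₂0]
    have e3 : d₂ (d₂ x) * y * d₁ z + d₂ x * y * d₂ (d₁ z)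
        + d₂ (d₁ x) * y * d₂ z + d₁ x * y * d₂ (d₂ z)
        = d₂ (d₂ x * y * d₁ z + d₁ x * y * d₂ z)
          - (d₂ x * d₂ y * d₁ z + d₁ x * d₂ y * d₂ z) := by
      simp only [hd₂a, hd₂m]; noncomm_ring
    rw [e3, e0, E1 x (d₂ y) z, sub_zero]
  have E6 : ∀ x y z : A, d₂ (D₂ x) * y * d₁ z + D₂ x * y * d₂ (d₁ z)
      + d₂ (D₁ x) * y * d₂ z + D₁ x * y * d₂ (d₂ z) = 0 := by
    intro x y z
    have e0 : d₂ (D₂ x * y * d₁ z + D₁ x * y * d₂ z) = 0 := by rw [E2, hd₂0]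
    have e3 : d₂ (D₂ x) * y * d₁ z + D₂ x * y * d₂ (d₁ z)
        + d₂ (D₁ x) * y * d₂ z + D₁ x * y * d₂ (d₂ z)
        = d₂ (D₂ x * y * d₁ z + D₁ x * y * d₂ z)
          - (D₂ x * d₂ y * d₁ z + D₁ x * d₂ y * d₂ z) := by
      simp only [hd₂a, hd₂m]; noncomm_ring
    rw [e3, e0, E2 x (d₂ y) z, sub_zero]
  intro x
  suffices key : ∀ P : Set A, IsPrimeTwoSidedIdeal P → d₁ (D₂ x) ∈ P ∧ d₂ (D₁ x) ∈ P by
    constructor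
    · exact Set.mem_iInter₂.mpr fun P hP => (key P hP).1
    · exact Set.mem_iInter₂.mpr fun P hP => (key P hP).2
  intro P hP
  obtain ⟨h0, hadd, hneg, hmulr, hmull, -, hprime⟩ := id hP
  have hor := skewPair hP d₂ d₁ (fun a y b => by rw [E1 a y b]; exact h0)
  rcases hor with hd2 | hd1
  · -- d₂(A) ⊆ P : second part is immediate, prove first part
    refine ⟨?_, hd2 (D₁ x)⟩
    by_cases hd1 : ∀ a, d₁ a ∈ P
    · exact hd1 _
    push_neg at hd1
    obtain ⟨z₁, hz₁⟩ := hd1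
    have hD2 : ∀ a, D₂ a ∈ P := by
      intro a
      have hstep : ∀ y, D₂ a * y * d₁ z₁ ∈ P := by
        intro y
        have e : D₂ a * y * d₁ z₁ = -(D₁ a * y * d₂ z₁) :=
          eq_neg_of_add_eq_zero_left (E2 a y z₁)
        rw [e]; exact hneg _ (hmull _ _ (hd2 z₁))
      rcases hprime _ _ hstep with hm | hm
      · exact hm
      · exact absurd hm hz₁
    have hg : ∀ a, d₁ (d₂ a) ∈ P := by
      have H : ∀ a y b, d₁ (d₂ a) * y * d₁ b + d₁ a * y * d₁ (d₂ b) ∈ P := by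
        intro a y b
        have e : d₁ (d₂ a) * y * d₁ b + d₁ a * y * d₁ (d₂ b)
            = -(d₂ a * y * d₁ (d₁ b) + d₁ (d₁ a) * y * d₂ b) := by
          have e3 := E3 a y b
          have e4 : d₁ (d₂ a) * y * d₁ b + d₁ a * y * d₁ (d₂ b)
              = (d₁ (d₂ a) * y * d₁ b + d₂ a * y * d₁ (d₁ b)
                  + d₁ (d₁ a) * y * d₂ b + d₁ a * y * d₁ (d₂ b))
                - (d₂ a * y * d₁ (d₁ b) + d₁ (d₁ a) * y * d₂ b) := by abel
          rw [e4, e3, zero_sub]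
        rw [e]
        exact hneg _ (hadd _ _ (hmulr _ _ (hmulr _ _ (hd2 a))) (hmull _ _ (hd2 b)))
      rcases skewPair hP (fun a => d₁ (d₂ a)) d₁ H with hm | hm
      · exact hm
      · exact absurd (hm z₁) hz₁
    have hstep : ∀ y, d₁ (D₂ x) * y * d₁ z₁ ∈ P := by
      intro y
      have e : d₁ (D₂ x) * y * d₁ z₁
          = -(D₂ x * y * d₁ (d₁ z₁) + d₁ (D₁ x) * y * d₂ z₁ + D₁ x * y * d₁ (d₂ z₁)) := by
        have e4 := E4 x y z₁
        have e5 : d₁ (D₂ x) * y * d₁ z₁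
            = (d₁ (D₂ x) * y * d₁ z₁ + D₂ x * y * d₁ (d₁ z₁)
                + d₁ (D₁ x) * y * d₂ z₁ + D₁ x * y * d₁ (d₂ z₁))
              - (D₂ x * y * d₁ (d₁ z₁) + d₁ (D₁ x) * y * d₂ z₁ + D₁ x * y * d₁ (d₂ z₁)) := by
          abel
        rw [e5, e4, zero_sub]
      rw [e]
      refine hneg _ (hadd _ _ (hadd _ _ ?_ ?_) ?_)
      · exact hmulr _ _ (hmulr _ _ (hD2 x))
      · exact hmull _ _ (hd2 z₁)
      · exact hmull _ _ (hg z₁)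
    rcases hprime _ _ hstep with hm | hm
    · exact hm
    · exact absurd hm hz₁
  · -- d₁(A) ⊆ P : first part is immediate, prove second part
    refine ⟨hd1 _, ?_⟩
    by_cases hd2 : ∀ a, d₂ a ∈ P
    · exact hd2 _
    push_neg at hd2
    obtain ⟨z₀, hz₀⟩ := hd2
    have hD1 : ∀ a, D₁ a ∈ P := by
      intro a
      have hstep : ∀ y, D₁ a * y * d₂ z₀ ∈ P := by
        intro y
        have e : D₁ a * y * d₂ z₀ = -(D₂ a * y * d₁ z₀) :=
          eq_neg_of_add_eq_zero_right (E2 a y z₀)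
        rw [e]; exact hneg _ (hmull _ _ (hd1 z₀))
      rcases hprime _ _ hstep with hm | hm
      · exact hm
      · exact absurd hm hz₀
    have hh : ∀ a, d₂ (d₁ a) ∈ P := by
      have H : ∀ a y b, d₂ (d₁ a) * y * d₂ b + d₂ a * y * d₂ (d₁ b) ∈ P := by
        intro a y b
        have e : d₂ (d₁ a) * y * d₂ b + d₂ a * y * d₂ (d₁ b)
            = -(d₂ (d₂ a) * y * d₁ b + d₁ a * y * d₂ (d₂ b)) := by
          have e5 := E5 a y b
          have e4 : d₂ (d₁ a) * y * d₂ b + d₂ a * y * d₂ (d₁ b)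
              = (d₂ (d₂ a) * y * d₁ b + d₂ a * y * d₂ (d₁ b)
                  + d₂ (d₁ a) * y * d₂ b + d₁ a * y * d₂ (d₂ b))
                - (d₂ (d₂ a) * y * d₁ b + d₁ a * y * d₂ (d₂ b)) := by abel
          rw [e4, e5, zero_sub]
        rw [e]
        exact hneg _ (hadd _ _ (hmull _ _ (hd1 b)) (hmulr _ _ (hmulr _ _ (hd1 a))))
      rcases skewPair hP (fun a => d₂ (d₁ a)) d₂ H with hm | hm
      · exact hm
      · exact absurd (hm z₀) hz₀
    have hstep : ∀ y, d₂ (D₁ x) * y * d₂ z₀ ∈ P := by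
      intro y
      have e : d₂ (D₁ x) * y * d₂ z₀
          = -(d₂ (D₂ x) * y * d₁ z₀ + D₂ x * y * d₂ (d₁ z₀) + D₁ x * y * d₂ (d₂ z₀)) := by
        have e6 := E6 x y z₀
        have e5 : d₂ (D₁ x) * y * d₂ z₀
            = (d₂ (D₂ x) * y * d₁ z₀ + D₂ x * y * d₂ (d₁ z₀)
                + d₂ (D₁ x) * y * d₂ z₀ + D₁ x * y * d₂ (d₂ z₀))
              - (d₂ (D₂ x) * y * d₁ z₀ + D₂ x * y * d₂ (d₁ z₀) + D₁ x * y * d₂ (d₂ z₀)) := by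
          abel
        rw [e5, e6, zero_sub]
      rw [e]
      refine hneg _ (hadd _ _ (hadd _ _ ?_ ?_) ?_)
      · exact hmull _ _ (hd1 z₀)
      · exact hmull _ _ (hh z₀)
      · exact hmulr _ _ (hmulr _ _ (hD1 x))
    rcases hprime _ _ hstep with hm | hm
    · exact hm
    · exact absurd hm hz₀
end

section
/- Let A be an (associative, not necessarily commutative) algebra over the complex numbers, let (D₁, d₁) and (D₂, d₂) be generalized derivations on A, and let α ∈ ℂ. Then the pair (αD₁³ + D₁∘D₂, αd₁³ + d₁∘d₂) is a generalized derivation on A if and only if 3αD₁²(x)d₁(y) + 3αD₁(x)d₁²(y) + D₂(x)d₁(y) + D₁(x)d₂(y) = 0 for all x, y ∈ A. -/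
/-- Expansion of `α • D₁³ + D₁ ∘ D₂` on a product. -/
lemma expand3 {A : Type*} [Ring A] [Algebra ℂ A]
    (D₁ d₁ D₂ d₂ : A → A) (α : ℂ)
    (h₁ : IsGenDerivation D₁ d₁) (h₂ : IsGenDerivation D₂ d₂) (x y : A) :
    α • D₁ (D₁ (D₁ (x * y))) + D₁ (D₂ (x * y)) =
      (α • D₁ (D₁ (D₁ x)) + D₁ (D₂ x)) * y + x * (α • d₁ (d₁ (d₁ y)) + d₁ (d₂ y)) +
      ((3 * α) • (D₁ (D₁ x) * d₁ y) + (3 * α) • (D₁ x * d₁ (d₁ y)) +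
        D₂ x * d₁ y + D₁ x * d₂ y) := by
  obtain ⟨a1, ⟨da1, dm1⟩, m1⟩ := h₁
  obtain ⟨a2, ⟨da2, dm2⟩, m2⟩ := h₂
  simp only [m1, m2, dm1, dm2, a1, da1]
  simp only [mul_add, add_mul, mul_assoc, smul_add, smul_mul_assoc, mul_smul_comm]
  module

/-- The relation for `(D₁, d₁), (D₂, d₂)` implies the corresponding one for
`(d₁, d₁), (d₂, d₂)`. -/
lemma cond_transfer {A : Type*} [Ring A] [Algebra ℂ A]
    (D₁ d₁ D₂ d₂ : A → A) (α : ℂ)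
    (h₁ : IsGenDerivation D₁ d₁) (h₂ : IsGenDerivation D₂ d₂)
    (hC : ∀ x y : A, (3 * α) • (D₁ (D₁ x) * d₁ y) + (3 * α) • (D₁ x * d₁ (d₁ y)) +
        D₂ x * d₁ y + D₁ x * d₂ y = 0) :
    ∀ x y : A, (3 * α) • (d₁ (d₁ x) * d₁ y) + (3 * α) • (d₁ x * d₁ (d₁ y)) +
        d₂ x * d₁ y + d₁ x * d₂ y = 0 := by
  obtain ⟨a1, ⟨da1, dm1⟩, m1⟩ := h₁
  obtain ⟨a2, ⟨da2, dm2⟩, m2⟩ := h₂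
  intro z y
  have comb : ((3 * α) • (D₁ (D₁ (1 * z)) * d₁ y) + (3 * α) • (D₁ (1 * z) * d₁ (d₁ y)) +
        D₂ (1 * z) * d₁ y + D₁ (1 * z) * d₂ y)
      - ((3 * α) • (D₁ (D₁ 1) * d₁ (z * y)) + (3 * α) • (D₁ 1 * d₁ (d₁ (z * y))) +
        D₂ 1 * d₁ (z * y) + D₁ 1 * d₂ (z * y))
      + ((3 * α) • (D₁ (D₁ 1) * d₁ z) + (3 * α) • (D₁ 1 * d₁ (d₁ z)) +
        D₂ 1 * d₁ z + D₁ 1 * d₂ z) * y = 0 := by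
    rw [hC (1 * z) y, hC 1 (z * y), hC 1 z]; simp
  rw [← comb]
  simp only [m1, m2, dm1, dm2, a1, da1]
  simp only [one_mul]
  simp only [mul_add, add_mul, mul_assoc, smul_add, smul_mul_assoc, mul_smul_comm,
    sub_eq_add_neg, neg_add]
  module

theorem stmt3 {A : Type*} [Ring A] [Algebra ℂ A]
    (D₁ d₁ D₂ d₂ : A → A) (α : ℂ)
    (h₁ : IsGenDerivation D₁ d₁) (h₂ : IsGenDerivation D₂ d₂) :
    IsGenDerivation (fun x => α • D₁ (D₁ (D₁ x)) + D₁ (D₂ x))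
        (fun x => α • d₁ (d₁ (d₁ x)) + d₁ (d₂ x)) ↔
      ∀ x y : A, (3 * α) • (D₁ (D₁ x) * d₁ y) + (3 * α) • (D₁ x * d₁ (d₁ y)) +
        D₂ x * d₁ y + D₁ x * d₂ y = 0 := by
  obtain ⟨a1, ⟨da1, dm1⟩, m1⟩ := id h₁
  obtain ⟨a2, ⟨da2, dm2⟩, m2⟩ := id h₂
  have hd₁ : IsGenDerivation d₁ d₁ := ⟨da1, ⟨da1, dm1⟩, dm1⟩
  have hd₂ : IsGenDerivation d₂ d₂ := ⟨da2, ⟨da2, dm2⟩, dm2⟩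
  constructor
  · intro hGD x y
    have he := expand3 D₁ d₁ D₂ d₂ α h₁ h₂ x y
    have hp := hGD.2.2 x y
    simp only at hp
    rw [hp] at he
    exact left_eq_add.mp he
  · intro hC
    have hCd := cond_transfer D₁ d₁ D₂ d₂ α h₁ h₂ hC
    refine ⟨?_, ⟨?_, ?_⟩, ?_⟩
    · intro x y
      simp only [a1, a2, da1, da2, smul_add]
      abel
    · intro x y
      simp only [da1, da2, smul_add]
      abel
    · intro x y
      have he := expand3 d₁ d₁ d₂ d₂ α hd₁ hd₂ x y
      rw [hCd x y, add_zero] at he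
      simpa using he
    · intro x y
      have he := expand3 D₁ d₁ D₂ d₂ α h₁ h₂ x y
      rw [hC x y, add_zero] at he
      simpa using he
end

section
/- Let R be a prime ring of characteristic different from 2 and let (D₁, d₁) and (D₂, d₂) be generalized derivations on R. Then the pair (D₁² + D₁∘D₂, d₁² + d₁∘d₂) is a generalized derivation on R if and only if one of the following holds: (i) d₁ ≠ 0, d₂ = −d₁ and D₂ = −D₁; (ii) d₁ = 0, d₂ ≠ 0 and D₁ = 0; (iii) d₁ = 0 and d₂ = 0 (that is, D₁ and D₂ are left centralizers). -/
private lemma addmap_zero {R : Type*} [Ring R] {D : R → R}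
    (h : ∀ x y, D (x + y) = D x + D y) : D 0 = 0 := by
  have h0 : D 0 + 0 = D 0 + D 0 := by simpa using h 0 0
  exact (add_left_cancel h0).symm

private lemma addmap_neg {R : Type*} [Ring R] {D : R → R}
    (h : ∀ x y, D (x + y) = D x + D y) (x : R) : D (-x) = -D x := by
  have h0 : D x + D (-x) = 0 := by
    rw [← h x (-x)]; simpa using addmap_zero h
  exact eq_neg_of_add_eq_zero_right h0

/-- Primeness helper: if `a * d y = 0` for all `y` and `d` satisfies the Leibniz rule,
then for each `y`, `a = 0` or `d y = 0`. -/
private lemma aux_prime {R : Type*} [Ring R]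
    (hprime : ∀ x y : R, (∀ r : R, x * r * y = 0) → x = 0 ∨ y = 0)
    {d : R → R} (hL : ∀ x y, d (x * y) = d x * y + x * d y)
    {a : R} (h : ∀ y, a * d y = 0) (y : R) : a = 0 ∨ d y = 0 := by
  apply hprime
  intro r
  have h1 := h (r * y)
  rw [hL, mul_add, ← mul_assoc, h r, zero_mul, zero_add] at h1
  rw [mul_assoc]; exact h1


/-- Core primeness argument: if `δ` is a nonzero derivation, `γ` is a derivation, and
`γ x * δ y + δ x * γ y = 0` for all `x, y`, then `γ = 0`. -/
private lemma key_vanish {R : Type*} [Ring R]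
    (hprime : ∀ x y : R, (∀ r : R, x * r * y = 0) → x = 0 ∨ y = 0)
    (hchar : ∀ x : R, 2 * x = 0 → x = 0)
    {δ γ : R → R}
    (hδadd : ∀ x y, δ (x + y) = δ x + δ y) (hδmul : ∀ x y, δ (x * y) = δ x * y + x * δ y)
    (hγadd : ∀ x y, γ (x + y) = γ x + γ y) (hγmul : ∀ x y, γ (x * y) = γ x * y + x * γ y)
    {x₁ : R} (hx₁ : δ x₁ ≠ 0)
    (star0 : ∀ x y : R, γ x * δ y + δ x * γ y = 0) :
    ∀ y : R, γ y = 0 := by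
  have star : ∀ x z y : R, γ x * z * δ y + δ x * z * γ y = 0 := by
    intro x z y
    have h := star0 (x * z) y
    rw [hγmul, hδmul] at h
    simp only [add_mul, mul_assoc] at h ⊢
    have hz : x * (γ z * δ y) + x * (δ z * γ y) = 0 := by
      rw [← mul_add, star0 z y, mul_zero]
    linear_combination (norm := abel1) h - hz
  have five : ∀ x z y w : R, δ x * z * (δ y * w * γ y) = 0 := by
    intro x z y w
    have w1 := star x (z * δ y * w) y
    have e1 : γ x * z * δ y = -(δ x * z * γ y) :=
      eq_neg_of_add_eq_zero_left (star x z y)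
    have e2 : γ y * w * δ y = -(δ y * w * γ y) :=
      eq_neg_of_add_eq_zero_left (star y w y)
    have A : γ x * (z * δ y * w) * δ y = δ x * z * (δ y * w * γ y) := by
      calc γ x * (z * δ y * w) * δ y
          = (γ x * z * δ y) * (w * δ y) := by noncomm_ring
        _ = (-(δ x * z * γ y)) * (w * δ y) := by rw [e1]
        _ = δ x * z * (-(γ y * w * δ y)) := by noncomm_ring
        _ = δ x * z * (-(-(δ y * w * γ y))) := by rw [e2]
        _ = δ x * z * (δ y * w * γ y) := by rw [neg_neg]
    have B : δ x * (z * δ y * w) * γ y = δ x * z * (δ y * w * γ y) := by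
      noncomm_ring
    rw [A, B] at w1
    apply hchar
    rw [two_mul]
    exact w1
  have h5 : ∀ y w : R, δ y * w * γ y = 0 := by
    intro y w
    exact (hprime (δ x₁) (δ y * w * γ y) (fun z => five x₁ z y w)).resolve_left hx₁
  have dichot : ∀ y : R, δ y = 0 ∨ γ y = 0 := by
    intro y
    exact hprime (δ y) (γ y) (fun w => h5 y w)
  intro y
  by_cases hdy : δ y = 0
  · have hy1 : γ (y + x₁) = 0 := by
      refine (dichot (y + x₁)).resolve_left ?_
      rw [hδadd, hdy, zero_add]; exact hx₁
    have hy2 : γ x₁ = 0 := (dichot x₁).resolve_left hx₁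
    have h := hγadd y x₁
    rw [hy1, hy2, add_zero] at h
    exact h.symm
  · exact (dichot y).resolve_left hdy

theorem stmt4 {R : Type*} [Ring R]
    (hprime : ∀ x y : R, (∀ r : R, x * r * y = 0) → x = 0 ∨ y = 0)
    (hchar : ∀ x : R, 2 * x = 0 → x = 0)
    (D₁ d₁ D₂ d₂ : R → R)
    (h₁ : IsGenDerivation D₁ d₁) (h₂ : IsGenDerivation D₂ d₂) :
    IsGenDerivation (fun x => D₁ (D₁ x) + D₁ (D₂ x)) (fun x => d₁ (d₁ x) + d₁ (d₂ x)) ↔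
      ((d₁ ≠ 0 ∧ d₂ = -d₁ ∧ D₂ = -D₁) ∨
       (d₁ = 0 ∧ d₂ ≠ 0 ∧ D₁ = 0) ∨
       (d₁ = 0 ∧ d₂ = 0)) := by
  obtain ⟨hD₁add, ⟨hd₁add, hd₁mul⟩, hD₁mul⟩ := h₁
  obtain ⟨hD₂add, ⟨hd₂add, hd₂mul⟩, hD₂mul⟩ := h₂
  constructor
  · rintro ⟨-, ⟨-, hfmul⟩, hFmul⟩
    -- Key identity I1: 2 D₁x d₁y + D₂x d₁y + D₁x d₂y = 0
    have I1 : ∀ x y : R, D₁ x * d₁ y + D₁ x * d₁ y + D₂ x * d₁ y + D₁ x * d₂ y = 0 := by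
      intro x y
      have h := hFmul x y
      simp only [hD₁mul, hD₂mul, hD₁add, add_mul, mul_add] at h
      linear_combination (norm := abel1) h
    -- Key identity I2: 2 d₁x d₁y + d₂x d₁y + d₁x d₂y = 0
    have I2 : ∀ x y : R, d₁ x * d₁ y + d₁ x * d₁ y + d₂ x * d₁ y + d₁ x * d₂ y = 0 := by
      intro x y
      have h := hfmul x y
      simp only [hd₁mul, hd₂mul, hd₁add, add_mul, mul_add] at h
      linear_combination (norm := abel1) h
    by_cases hd1 : d₁ = 0
    · by_cases hd2 : d₂ = 0
      · exact Or.inr (Or.inr ⟨hd1, hd2⟩)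
      · refine Or.inr (Or.inl ⟨hd1, hd2, ?_⟩)
        obtain ⟨y₀, hy₀⟩ := Function.ne_iff.mp hd2
        simp only [Pi.zero_apply] at hy₀
        funext x
        have key : ∀ y, D₁ x * d₂ y = 0 := by
          intro y
          have h := I1 x y
          simp only [hd1, Pi.zero_apply, mul_zero, zero_add] at h
          exact h
        exact (aux_prime hprime hd₂mul key y₀).resolve_right hy₀
    · -- d₁ ≠ 0 case
      obtain ⟨x₁, hx₁⟩ := Function.ne_iff.mp hd1
      simp only [Pi.zero_apply] at hx₁
      have hgadd : ∀ x y : R, (d₁ x + d₂ x) + (d₁ y + d₂ y) = (d₁ (x+y) + d₂ (x+y)) := by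
        intro x y; rw [hd₁add, hd₂add]; abel
      have gzero : ∀ y : R, d₁ y + d₂ y = 0 := by
        refine key_vanish hprime hchar hd₁add hd₁mul
          (γ := fun x => d₁ x + d₂ x) (fun x y => (hgadd x y).symm) ?_ hx₁ ?_
        · intro x y
          simp only [hd₁mul, hd₂mul, add_mul, mul_add]
          abel
        · intro x y
          have h := I2 x y
          simp only [add_mul, mul_add]
          linear_combination (norm := abel1) h
      have hd2y : ∀ y, d₂ y = -d₁ y := by
        intro y
        exact eq_neg_of_add_eq_zero_right (gzero y)
      refine Or.inl ⟨hd1, ?_, ?_⟩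
      · funext y; simp [hd2y y]
      · -- D₂ = -D₁
        have IP : ∀ x y : R, (D₁ x + D₂ x) * d₁ y = 0 := by
          intro x y
          have h := I1 x y
          rw [hd2y y, mul_neg] at h
          rw [add_mul]
          linear_combination (norm := abel1) h
        funext x
        have h := (aux_prime hprime hd₁mul (IP x) x₁).resolve_right hx₁
        simp only [Pi.neg_apply]
        exact eq_neg_of_add_eq_zero_right h
  · rintro (⟨hd1, hd2, hD2⟩ | ⟨hd1, hd2, hD1⟩ | ⟨hd1, hd2⟩)
    · -- case (i): d₂ = -d₁, D₂ = -D₁; both composite maps vanish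
      have hF0 : ∀ x, D₁ (D₁ x) + D₁ (D₂ x) = 0 := by
        intro x
        rw [hD2]
        simp only [Pi.neg_apply, addmap_neg hD₁add]
        exact add_neg_cancel _
      have hf0 : ∀ x, d₁ (d₁ x) + d₁ (d₂ x) = 0 := by
        intro x
        rw [hd2]
        simp only [Pi.neg_apply, addmap_neg hd₁add]
        exact add_neg_cancel _
      exact ⟨fun x y => by simp [hF0], ⟨⟨fun x y => by simp [hf0], fun x y => by simp [hf0]⟩,
        fun x y => by simp [hF0, hf0]⟩⟩
    · -- case (ii): d₁ = 0, D₁ = 0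
      exact ⟨fun x y => by simp [hd1, hD1], ⟨⟨fun x y => by simp [hd1], fun x y => by simp [hd1]⟩,
        fun x y => by simp [hd1, hD1]⟩⟩
    · -- case (iii): d₁ = 0, d₂ = 0, so D₁ and D₂ are left centralizers
      have c₁ : ∀ a b : R, D₁ (a * b) = D₁ a * b := by
        intro a b; rw [hD₁mul, hd1]; simp
      have c₂ : ∀ a b : R, D₂ (a * b) = D₂ a * b := by
        intro a b; rw [hD₂mul, hd2]; simp
      refine ⟨fun x y => ?_, ⟨⟨fun x y => by simp [hd1], fun x y => by simp [hd1]⟩,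
        fun x y => ?_⟩⟩
      · simp only
        rw [hD₁add, hD₂add, hD₁add, hD₁add]
        abel
      · simp only
        rw [c₁, c₂, c₁, c₁, hd1]
        simp [add_mul]
end

section
/- Let R be a ring and let d₁ and d₂ be derivations on R. If the map d₁² + d₁∘d₂ is again a derivation on R, then 2d₁(x)d₁(y) + d₂(x)d₁(y) + d₁(x)d₂(y) = 0 for all x, y ∈ R. -/
theorem stmt6 {R : Type*} [Ring R] (d₁ d₂ : R → R)
    (h₁ : IsDerivation d₁) (h₂ : IsDerivation d₂)
    (h : IsDerivation (fun x => d₁ (d₁ x) + d₁ (d₂ x))) :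
    ∀ x y : R, 2 * (d₁ x * d₁ y) + d₂ x * d₁ y + d₁ x * d₂ y = 0 := by
  intro x y
  have key := h.2 x y
  simp only at key
  have e1 : d₁ (d₁ (x * y)) =
      d₁ (d₁ x) * y + d₁ x * d₁ y + (d₁ x * d₁ y + x * d₁ (d₁ y)) := by
    rw [h₁.2, h₁.1, h₁.2, h₁.2]
  have e2 : d₁ (d₂ (x * y)) =
      d₁ (d₂ x) * y + d₂ x * d₁ y + (d₁ x * d₂ y + x * d₁ (d₂ y)) := by
    rw [h₂.2, h₁.1, h₁.2, h₁.2]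
  rw [e1, e2] at key
  rw [two_mul]
  linear_combination (norm := noncomm_ring) key
end

section
/- Let R be a prime ring of characteristic different from 2 and let d₁ and d₂ be derivations on R. If the map d₁² + d₁∘d₂ is again a derivation on R, then d₁(z)d₂(y) = d₂(z)d₁(y) for all y, z ∈ R. -/
theorem stmt7 {R : Type*} [Ring R]
    (hprime : ∀ x y : R, (∀ r : R, x * r * y = 0) → x = 0 ∨ y = 0)
    (hchar : ∀ x : R, 2 * x = 0 → x = 0)
    (d₁ d₂ : R → R)
    (h₁ : IsDerivation d₁) (h₂ : IsDerivation d₂)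
    (h : IsDerivation (fun x => d₁ (d₁ x) + d₁ (d₂ x))) :
    ∀ y z : R, d₁ z * d₂ y = d₂ z * d₁ y := by
  obtain ⟨ha1, hm1⟩ := h₁
  obtain ⟨ha2, hm2⟩ := h₂
  -- (star)
  have star : ∀ x y : R, 2*(d₁ x * d₁ y) + d₂ x * d₁ y + d₁ x * d₂ y = 0 := by
    intro x y
    have e1 : d₁ (d₁ (x * y)) = d₁ (d₁ x) * y + d₁ x * d₁ y + (d₁ x * d₁ y + x * d₁ (d₁ y)) := by
      rw [hm1 x y, ha1, hm1, hm1]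
    have e2 : d₁ (d₂ (x * y)) = d₁ (d₂ x) * y + d₂ x * d₁ y + (d₁ x * d₂ y + x * d₁ (d₂ y)) := by
      rw [hm2 x y, ha1, hm1, hm1]
    have hf := h.2 x y
    simp only at hf
    rw [e1, e2] at hf
    linear_combination (norm := noncomm_ring) hf
  -- (B): with e := d₁ + d₂
  have hB : ∀ x z y : R, (d₁ x + d₂ x) * z * d₁ y + d₁ x * z * (d₁ y + d₂ y) = 0 := by
    intro x z y
    have h1 := star (x * z) y
    rw [hm1 x z, hm2 x z] at h1
    have h2 := star z y
    linear_combination (norm := noncomm_ring) h1 - x * h2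
  -- key sandwich
  have key : ∀ x z y w x' : R, d₁ x * z * (d₁ y * w * (d₁ x' + d₂ x')) = 0 := by
    intro x z y w x'
    have b1 := hB x (z * d₁ y * w) x'
    have b2 := hB x z y
    have b3 := hB y w x'
    -- from b2:  (d₁x+d₂x)*z*d₁y = - d₁x*z*(d₁y+d₂y)
    -- multiply b2 on right by (w * d₁ x'):
    have c2 : (d₁ x + d₂ x) * z * d₁ y * (w * d₁ x')
        + d₁ x * z * (d₁ y + d₂ y) * (w * d₁ x') = 0 := by
      have := congrArg (fun t => t * (w * d₁ x')) b2
      simpa [add_mul, zero_mul] using this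
    -- multiply b3 on left by (d₁ x * z):
    have c3 : d₁ x * z * ((d₁ y + d₂ y) * w * d₁ x')
        + d₁ x * z * (d₁ y * w * (d₁ x' + d₂ x')) = 0 := by
      have := congrArg (fun t => d₁ x * z * t) b3
      simpa [mul_add, mul_zero] using this
    have sum : 2 * (d₁ x * z * (d₁ y * w * (d₁ x' + d₂ x'))) = 0 := by
      linear_combination (norm := noncomm_ring) c3 - c2 + b1
    exact hchar _ sum
  -- deduce d₁ y * w * e x' = 0 for all y w x'
  have key2 : ∀ y w x' : R, d₁ y * w * (d₁ x' + d₂ x') = 0 := by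
    intro y w x'
    rcases hprime (d₁ y) (d₁ y * w * (d₁ x' + d₂ x')) (fun r => key y r y w x') with h0 | h0
    · simp [h0]
    · exact h0
  -- deduce e x' * d₁ y = 0
  have key3 : ∀ x' y : R, (d₁ x' + d₂ x') * d₁ y = 0 := by
    intro x' y
    rcases hprime (d₁ y) (d₁ x' + d₂ x') (fun r => key2 y r x') with h0 | h0
    · simp [h0]
    · simp [h0]
  intro y z
  have h1 := star z y
  have h2 := key3 z y
  linear_combination (norm := noncomm_ring) h1 - 2 * h2
end

section
/- Let R be a prime ring of characteristic different from 2 and let d₁ and d₂ be derivations on R. If the map d₁² + d₁∘d₂ is again a derivation on R, then (d₁(z) + d₂(z)) · x · d₁(y) = 0 for all x, y, z ∈ R. -/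
theorem stmt8 {R : Type*} [Ring R]
    (hprime : ∀ x y : R, (∀ r : R, x * r * y = 0) → x = 0 ∨ y = 0)
    (hchar : ∀ x : R, 2 * x = 0 → x = 0)
    (d₁ d₂ : R → R)
    (h₁ : IsDerivation d₁) (h₂ : IsDerivation d₂)
    (h : IsDerivation (fun x => d₁ (d₁ x) + d₁ (d₂ x))) :
    ∀ x y z : R, (d₁ z + d₂ z) * x * d₁ y = 0 := by
  obtain ⟨a1, m1⟩ := h₁
  obtain ⟨a2, m2⟩ := h₂
  obtain ⟨ah, mh⟩ := h
  -- base identity: 2 d₁x d₁y + d₂x d₁y + d₁x d₂y = 0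
  have H : ∀ x y : R, 2 * (d₁ x * d₁ y) + d₂ x * d₁ y + d₁ x * d₂ y = 0 := by
    intro x y
    have e := mh x y
    simp only at e
    rw [m1 x y, m2 x y, a1, a1, m1, m1, m1, m1] at e
    linear_combination (norm := noncomm_ring) e
  -- linearized: (2 d₁x + d₂x) y d₁w + d₁x y d₂w = 0
  have K : ∀ x y w : R, (2 * d₁ x + d₂ x) * y * d₁ w + d₁ x * y * d₂ w = 0 := by
    intro x y w
    have e := H x (y * w)
    rw [m1 y w, m2 y w] at e
    linear_combination (norm := noncomm_ring) e - H x y * w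
  -- functional identity consequence
  have E : ∀ X Y r w' w : R,
      d₁ X * Y * (d₁ w' * r * (d₁ w + d₂ w) - (d₁ w' + d₂ w') * r * d₁ w) = 0 := by
    intro X Y r w' w
    linear_combination (norm := noncomm_ring) K X (Y * d₁ w' * r) w - K X Y w' * (r * d₁ w)
  intro x y z
  rcases hprime (d₁ y) (d₁ z * x * (d₁ y + d₂ y) - (d₁ z + d₂ z) * x * d₁ y)
      (fun r => E y r x z y) with hy | hc
  · rw [hy, mul_zero]
  · exact hchar _ (by linear_combination (norm := noncomm_ring) K z x y - hc)
end

section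
/- Let R be a prime ring of characteristic different from 2 and let d₁ and d₂ be derivations on R. If the map d₁² + d₁∘d₂ is again a derivation on R, then d₁ = 0 or d₁ = −d₂. -/
theorem stmt9 {R : Type*} [Ring R]
    (hprime : ∀ x y : R, (∀ r : R, x * r * y = 0) → x = 0 ∨ y = 0)
    (hchar : ∀ x : R, 2 * x = 0 → x = 0)
    (d₁ d₂ : R → R)
    (h₁ : IsDerivation d₁) (h₂ : IsDerivation d₂)
    (h : IsDerivation (fun x => d₁ (d₁ x) + d₁ (d₂ x))) :
    d₁ = 0 ∨ d₁ = -d₂ := by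
  obtain ⟨h₁a, h₁m⟩ := h₁
  obtain ⟨h₂a, h₂m⟩ := h₂
  obtain ⟨hDa, hDm⟩ := h
  -- Step 1: (d₁+d₂)x * d₁ y + d₁ x * (d₁+d₂) y = 0
  have star0 : ∀ x y : R, (d₁ x + d₂ x) * d₁ y + d₁ x * (d₁ y + d₂ y) = 0 := by
    intro x y
    have hm := hDm x y
    simp only [h₁m, h₂m, h₁a] at hm
    have key : (d₁ x + d₂ x) * d₁ y + d₁ x * (d₁ y + d₂ y)
        = (d₁ (d₁ x) * y + d₁ x * d₁ y + (d₁ x * d₁ y + x * d₁ (d₁ y)) +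
            (d₁ (d₂ x) * y + d₂ x * d₁ y + (d₁ x * d₂ y + x * d₁ (d₂ y))))
          - ((d₁ (d₁ x) + d₁ (d₂ x)) * y + x * (d₁ (d₁ y) + d₁ (d₂ y))) := by
      noncomm_ring
    rw [key, hm, sub_self]
  -- Step 2: (d₁+d₂)x * y * d₁ z + d₁ x * y * (d₁+d₂) z = 0
  have star : ∀ x y z : R,
      (d₁ x + d₂ x) * y * d₁ z + d₁ x * y * (d₁ z + d₂ z) = 0 := by
    intro x y z
    have a := star0 x (y * z)
    rw [h₁m, h₂m] at a
    have b := star0 x y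
    have key : (d₁ x + d₂ x) * y * d₁ z + d₁ x * y * (d₁ z + d₂ z)
        = ((d₁ x + d₂ x) * (d₁ y * z + y * d₁ z) +
            d₁ x * ((d₁ y * z + y * d₁ z) + (d₂ y * z + y * d₂ z)))
          - ((d₁ x + d₂ x) * d₁ y + d₁ x * (d₁ y + d₂ y)) * z := by
      noncomm_ring
    rw [key, a, b, zero_mul, sub_self]
  -- Step 3: ((d₁+d₂)x * y * d₁ x - d₁ x * y * (d₁+d₂)x) * w * d₁ z = 0
  have key2 : ∀ x y w z : R,
      ((d₁ x + d₂ x) * y * d₁ x - d₁ x * y * (d₁ x + d₂ x)) * w * d₁ z = 0 := by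
    intro x y w z
    have a := star x (y * (d₁ x * w)) z
    have b := star x w z
    have key : ((d₁ x + d₂ x) * y * d₁ x - d₁ x * y * (d₁ x + d₂ x)) * w * d₁ z
        = ((d₁ x + d₂ x) * (y * (d₁ x * w)) * d₁ z +
            d₁ x * (y * (d₁ x * w)) * (d₁ z + d₂ z))
          - d₁ x * y * ((d₁ x + d₂ x) * w * d₁ z + d₁ x * w * (d₁ z + d₂ z)) := by
      noncomm_ring
    rw [key, a, b, mul_zero, sub_self]
  by_cases hd : d₁ = 0
  · exact Or.inl hd
  · right
    have ⟨z₀, hz₀⟩ : ∃ z, d₁ z ≠ 0 := by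
      by_contra hc
      push_neg at hc
      exact hd (funext fun x => hc x)
    -- from key2 and primeness: commuting relation
    have comm : ∀ x y : R, (d₁ x + d₂ x) * y * d₁ x = d₁ x * y * (d₁ x + d₂ x) := by
      intro x y
      have := hprime _ _ (fun w => key2 x y w z₀)
      rcases this with h0 | h0
      · exact sub_eq_zero.mp h0
      · exact absurd h0 hz₀
    -- so d₁ x * y * (d₁+d₂) x = 0
    have ann : ∀ x y : R, d₁ x * y * (d₁ x + d₂ x) = 0 := by
      intro x y
      have a := star x y x
      rw [comm x y] at a
      have : 2 * (d₁ x * y * (d₁ x + d₂ x)) = 0 := by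
        rw [two_mul]; exact a
      exact hchar _ this
    -- for each x : d₁ x = 0 ∨ (d₁+d₂) x = 0
    have split : ∀ x : R, d₁ x = 0 ∨ d₁ x + d₂ x = 0 := fun x =>
      hprime _ _ (ann x)
    have hδz₀ : d₁ z₀ + d₂ z₀ = 0 := (split z₀).resolve_left hz₀
    have hall : ∀ x : R, d₁ x + d₂ x = 0 := by
      intro x
      rcases split x with h0 | h0
      · -- d₁ x = 0; consider x + z₀
        have hd1 : d₁ (x + z₀) ≠ 0 := by
          rw [h₁a, h0, zero_add]; exact hz₀
        have := (split (x + z₀)).resolve_left hd1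
        rw [h₁a, h₂a, h0, zero_add] at this
        have hx2 : d₂ x + (d₁ z₀ + d₂ z₀) = d₂ x := by rw [hδz₀, add_zero]
        have : d₂ x = 0 := by
          have h' : d₂ x + (d₁ z₀ + d₂ z₀) = 0 := by
            rw [← this]; abel
          rwa [hδz₀, add_zero] at h'
        rw [h0, this, add_zero]
      · exact h0
    funext x
    have := hall x
    simp only [Pi.neg_apply]
    exact eq_neg_of_add_eq_zero_left this
end

section
/- Let R be a prime ring of characteristic different from 2, let (D₁, d₁) and (D₂, d₂) be generalized derivations on R, and suppose the pair (D₁² + D₁∘D₂, d₁² + d₁∘d₂) is a generalized derivation on R. Then the following assertions are equivalent: (a) D₁ is a nonzero derivation; (b) D₂ is a nonzero derivation and D₂ = −D₁; (c) both D₁ and D₂ are nonzero derivations; (d) D₁ is a nonzero derivation and D₁ = −D₂. -/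
section Aux

variable {R : Type*} [Ring R]

private lemma cancel_eq0 {a c : R} (h : a = 0) (h2 : c = a) : c = 0 := by
  rw [h2, h]

private lemma cancel2 {a b c : R} (ha : a = 0) (hb : b = 0) (h : c = a - b) : c = 0 := by
  rw [h, ha, hb, sub_zero]

private lemma derEq {D d : R → R} (h : IsGenDerivation D d) (hD : IsDerivation D) (y : R) :
    d y = D y := by
  have h1 := h.2.2 1 y
  have h2 := hD.2 1 y
  rw [h1] at h2
  have h3 := add_left_cancel h2
  rwa [one_mul, one_mul] at h3

private lemma key
    (hprime : ∀ x y : R, (∀ r : R, x * r * y = 0) → x = 0 ∨ y = 0)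
    (hchar : ∀ x : R, 2 * x = 0 → x = 0)
    {D₁ d₁ D₂ d₂ : R → R}
    (h₁ : IsGenDerivation D₁ d₁) (h₂ : IsGenDerivation D₂ d₂)
    (h : IsGenDerivation (fun x => D₁ (D₁ x) + D₁ (D₂ x)) (fun x => d₁ (d₁ x) + d₁ (d₂ x)))
    {z₀ : R} (hz : d₁ z₀ ≠ 0) :
    ∀ x, D₂ x = - D₁ x := by
  have star : ∀ x y, (D₁ x + D₁ x + D₂ x) * d₁ y + D₁ x * d₂ y = 0 := by
    intro x y
    have e := h.2.2 x y
    simp only [h₁.1, h₁.2.2, h₂.2.2] at e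
    have e0 := sub_eq_zero_of_eq e
    apply cancel_eq0 e0
    noncomm_ring
  have star2 : ∀ x y z, (D₁ x + D₁ x + D₂ x) * (y * d₁ z) + D₁ x * (y * d₂ z) = 0 := by
    intro x y z
    have e := star x (y * z)
    rw [h₁.2.1.2, h₂.2.1.2] at e
    have e2 := congrArg (· * z) (star x y)
    simp only [zero_mul] at e2
    apply cancel2 e e2
    noncomm_ring
  have star3 : ∀ w y z, (d₁ w + d₁ w + d₂ w) * (y * d₁ z) + d₁ w * (y * d₂ z) = 0 := by
    intro w y z
    have e := star2 (1 * w) y z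
    simp only [h₁.2.2, h₂.2.2] at e
    have e2 := star2 1 (w * y) z
    apply cancel2 e e2
    noncomm_ring
  have hdag : ∀ w y z, (d₁ w + d₂ w) * y * d₁ z + d₁ w * y * (d₁ z + d₂ z) = 0 := by
    intro w y z
    apply cancel_eq0 (star3 w y z)
    noncomm_ring
  have comm : ∀ w y, (d₁ w + d₂ w) * y * d₁ w = d₁ w * y * (d₁ w + d₂ w) := by
    intro w y
    have key2 : ∀ y' : R,
        ((d₁ w + d₂ w) * y * d₁ w - d₁ w * y * (d₁ w + d₂ w)) * y' * d₁ z₀ = 0 := by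
      intro y'
      have e1 := hdag w (y * d₁ w * y') z₀
      have e2 := congrArg (fun t => d₁ w * y * t) (hdag w y' z₀)
      simp only [mul_zero] at e2
      apply cancel2 e1 e2
      noncomm_ring
    rcases hprime _ _ key2 with h0 | h0
    · exact sub_eq_zero.mp h0
    · exact absurd h0 hz
  have step2 : ∀ w y, d₁ w * y * (d₁ w + d₂ w) = 0 := by
    intro w y
    apply hchar
    rw [two_mul]
    have e1 := hdag w y w
    rw [comm w y] at e1
    exact e1
  have orth : ∀ w, d₁ w = 0 ∨ d₁ w + d₂ w = 0 := fun w => hprime _ _ (step2 w)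
  have hq0 : ∀ u, d₁ u + d₂ u = 0 := by
    intro u
    by_contra hu
    rcases orth u with h0 | h0
    · have hz0q : d₁ z₀ + d₂ z₀ = 0 := (orth z₀).resolve_left hz
      have hsum : d₁ (u + z₀) ≠ 0 := by
        rw [h₁.2.1.1, h0, zero_add]; exact hz
      have hq := (orth (u + z₀)).resolve_left hsum
      rw [h₁.2.1.1, h₂.2.1.1] at hq
      apply hu
      calc d₁ u + d₂ u
          = ((d₁ u + d₁ z₀) + (d₂ u + d₂ z₀)) - (d₁ z₀ + d₂ z₀) := by abel
        _ = 0 := by rw [hq, hz0q, sub_zero]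
    · exact hu h0
  have hd2 : ∀ z, d₂ z = - d₁ z := by
    intro z
    exact eq_neg_of_add_eq_zero_right (hq0 z)
  have fin1 : ∀ x y, (D₁ x + D₂ x) * d₁ y = 0 := by
    intro x y
    have e := star x y
    rw [hd2 y] at e
    apply cancel_eq0 e
    noncomm_ring
  have fin2 : ∀ x z, ∀ y, (D₁ x + D₂ x) * y * d₁ z = 0 := by
    intro x z y
    have e := fin1 x (y * z)
    rw [h₁.2.1.2] at e
    have e2 := congrArg (· * z) (fin1 x y)
    simp only [zero_mul] at e2
    apply cancel2 e e2
    noncomm_ring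
  intro x
  exact eq_neg_of_add_eq_zero_right ((hprime _ _ (fin2 x z₀)).resolve_right hz)

end Aux

theorem stmt10 {R : Type*} [Ring R]
    (hprime : ∀ x y : R, (∀ r : R, x * r * y = 0) → x = 0 ∨ y = 0)
    (hchar : ∀ x : R, 2 * x = 0 → x = 0)
    (D₁ d₁ D₂ d₂ : R → R)
    (h₁ : IsGenDerivation D₁ d₁) (h₂ : IsGenDerivation D₂ d₂)
    (h : IsGenDerivation (fun x => D₁ (D₁ x) + D₁ (D₂ x)) (fun x => d₁ (d₁ x) + d₁ (d₂ x))) :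
    [IsDerivation D₁ ∧ D₁ ≠ 0,
     (IsDerivation D₂ ∧ D₂ ≠ 0) ∧ D₂ = -D₁,
     (IsDerivation D₁ ∧ D₁ ≠ 0) ∧ (IsDerivation D₂ ∧ D₂ ≠ 0),
     (IsDerivation D₁ ∧ D₁ ≠ 0) ∧ D₁ = -D₂].TFAE := by
  have ab : (IsDerivation D₁ ∧ D₁ ≠ 0) → ((IsDerivation D₂ ∧ D₂ ≠ 0) ∧ D₂ = -D₁) := by
    rintro ⟨hder, hne⟩
    have hd1 : ∀ y, d₁ y = D₁ y := derEq h₁ hder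
    obtain ⟨x₀, hx₀⟩ : ∃ x, D₁ x ≠ 0 := by
      by_contra hc
      push_neg at hc
      exact hne (funext hc)
    have hz : d₁ x₀ ≠ 0 := by rw [hd1]; exact hx₀
    have hk := key hprime hchar h₁ h₂ h hz
    refine ⟨⟨⟨h₂.1, ?_⟩, ?_⟩, funext fun x => by rw [hk x]; rfl⟩
    · intro x y
      rw [hk (x * y), hder.2 x y, hk x, hk y]
      noncomm_ring
    · intro hc
      apply hne
      funext x
      have hD2x : D₂ x = 0 := by rw [hc]; rfl
      rw [hk x] at hD2x
      simpa using hD2x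
  have bc : ((IsDerivation D₂ ∧ D₂ ≠ 0) ∧ D₂ = -D₁) →
      ((IsDerivation D₁ ∧ D₁ ≠ 0) ∧ (IsDerivation D₂ ∧ D₂ ≠ 0)) := by
    rintro ⟨⟨hder2, hne2⟩, heq⟩
    have hx : ∀ x, D₂ x = -(D₁ x) := fun x => by rw [heq]; rfl
    have hDx : ∀ x, D₁ x = -(D₂ x) := fun x => by rw [hx x, neg_neg]
    refine ⟨⟨⟨h₁.1, ?_⟩, ?_⟩, hder2, hne2⟩
    · intro x y
      rw [hDx (x * y), hder2.2 x y, hDx x, hDx y]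
      noncomm_ring
    · intro hc
      apply hne2
      funext x
      rw [hx x, hc]
      simp
  have cd : ((IsDerivation D₁ ∧ D₁ ≠ 0) ∧ (IsDerivation D₂ ∧ D₂ ≠ 0)) →
      ((IsDerivation D₁ ∧ D₁ ≠ 0) ∧ D₁ = -D₂) := by
    rintro ⟨ha, _⟩
    have hb := ab ha
    refine ⟨ha, funext fun x => ?_⟩
    have hx : D₂ x = -(D₁ x) := by rw [hb.2]; rfl
    show D₁ x = -(D₂ x)
    rw [hx, neg_neg]
  tfae_have 1 → 2 := ab
  tfae_have 2 → 3 := bc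
  tfae_have 3 → 4 := cd
  tfae_have 4 → 1 := fun hd => hd.1
  tfae_finish
end

section
/- Let R be a prime ring of characteristic different from 2, let ξ, ζ ∈ R, and let (D₁, d₁) and (D₂, d₂) be generalized derivations on R such that the pair (D₁² + D₁∘D₂, d₁² + d₁∘d₂) is a generalized derivation on R. If D₁ is the inner generalized derivation F_{ξ,ζ} : r ↦ ζr + rξ (so that d₁ is the inner derivation t ↦ tξ − ξt), then either D₂ = −F_{ξ,ζ} (and d₂ = −d₁), or ξ lies in the center Z(R) of R. -/
theorem stmt11 {R : Type*} [Ring R]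
    (hprime : ∀ x y : R, (∀ r : R, x * r * y = 0) → x = 0 ∨ y = 0)
    (hchar : ∀ x : R, 2 * x = 0 → x = 0)
    (ξ ζ : R) (D₁ d₁ D₂ d₂ : R → R)
    (h₁ : IsGenDerivation D₁ d₁) (h₂ : IsGenDerivation D₂ d₂)
    (h : IsGenDerivation (fun x => D₁ (D₁ x) + D₁ (D₂ x)) (fun x => d₁ (d₁ x) + d₁ (d₂ x)))
    (hD₁ : D₁ = fun r => ζ * r + r * ξ) (hd₁ : d₁ = fun t => t * ξ - ξ * t) :
    ((D₂ = fun r => -(ζ * r + r * ξ)) ∧ d₂ = -d₁) ∨ ξ ∈ Set.center R := by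
  by_cases hξ : ∀ g : R, g * ξ = ξ * g
  · exact Or.inr (Semigroup.mem_center_iff.mpr hξ)
  · push_neg at hξ
    obtain ⟨z₀, hz₀⟩ := hξ
    have hd₁z₀ : d₁ z₀ ≠ 0 := by
      simp only [hd₁]
      simpa [sub_eq_zero] using hz₀
    left
    -- Step A
    have eqA : ∀ x y : R, (D₁ x + D₂ x) * d₁ y + D₁ x * (d₁ y + d₂ y) = 0 := by
      intro x y
      have hG := h.2.2 x y
      simp only [h₁.2.2, h₂.2.2, h₁.1] at hG
      linear_combination (norm := noncomm_ring) hG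
    -- Step B
    have eqB : ∀ x y z : R,
        (D₁ x + D₂ x) * y * d₁ z + D₁ x * y * (d₁ z + d₂ z) = 0 := by
      intro x y z
      have h1 := eqA x (y * z)
      rw [h₁.2.1.2 y z, h₂.2.1.2 y z] at h1
      have h2 : ((D₁ x + D₂ x) * d₁ y + D₁ x * (d₁ y + d₂ y)) * z = 0 := by
        rw [eqA x y, zero_mul]
      linear_combination (norm := noncomm_ring) h1 - h2
    -- Step C
    have eqC : ∀ w y z : R,
        (d₁ w + d₂ w) * y * d₁ z + d₁ w * y * (d₁ z + d₂ z) = 0 := by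
      intro w y z
      have e1 : D₁ w = D₁ 1 * w + d₁ w := by
        have := h₁.2.2 1 w; simpa using this
      have e2 : D₂ w = D₂ 1 * w + d₂ w := by
        have := h₂.2.2 1 w; simpa using this
      have hB1 := eqB w y z
      rw [e1, e2] at hB1
      have hB2 := eqB 1 (w * y) z
      linear_combination (norm := noncomm_ring) hB1 - hB2
    -- f = 0
    have hfzero : ∀ w : R, d₁ w + d₂ w = 0 := by
      by_contra hf
      push_neg at hf
      obtain ⟨w₀, hw₀⟩ := hf
      have comm : ∀ z t : R,
          (d₁ z + d₂ z) * t * d₁ z = d₁ z * t * (d₁ z + d₂ z) := by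
        intro z t
        have key : ∀ y : R, (d₁ w₀ + d₂ w₀) * y *
            ((d₁ z + d₂ z) * t * d₁ z - d₁ z * t * (d₁ z + d₂ z)) = 0 := by
          intro y
          have hC1 := eqC w₀ (y * (d₁ z + d₂ z) * t) z
          have hC2 : ((d₁ w₀ + d₂ w₀) * y * d₁ z + d₁ w₀ * y * (d₁ z + d₂ z))
              * (t * (d₁ z + d₂ z)) = 0 := by
            rw [eqC w₀ y z, zero_mul]
          linear_combination (norm := noncomm_ring) hC1 - hC2
        have := (hprime _ _ key).resolve_left hw₀
        rw [sub_eq_zero] at this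
        exact this
      have hzd : ∀ z : R, d₁ z + d₂ z = 0 ∨ d₁ z = 0 := by
        intro z
        refine hprime _ _ (fun y => ?_)
        have h1 := eqC z y z
        rw [← comm z y] at h1
        exact hchar _ (by linear_combination (norm := noncomm_ring) h1)
      have hdw₀ : d₁ w₀ = 0 := (hzd w₀).resolve_left hw₀
      have hd₁all : ∀ z : R, d₁ z = 0 := by
        intro z
        refine ((hprime _ _ (fun y => ?_)).resolve_left hw₀)
        have h1 := eqC w₀ y z
        rw [hdw₀] at h1 ⊢
        linear_combination (norm := noncomm_ring) h1
      exact hd₁z₀ (hd₁all z₀)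
    -- D₂ = -D₁
    have hFzero : ∀ x : R, D₁ x + D₂ x = 0 := by
      intro x
      refine ((hprime _ (d₁ z₀) (fun y => ?_)).resolve_right hd₁z₀)
      have h1 := eqB x y z₀
      rw [hfzero z₀] at h1
      linear_combination (norm := noncomm_ring) h1
    constructor
    · funext r
      have h0 : D₂ r = -(D₁ r) := eq_neg_of_add_eq_zero_right (hFzero r)
      rw [h0, hD₁]
    · funext w
      simp only [Pi.neg_apply]
      exact eq_neg_of_add_eq_zero_right (hfzero w)
end

section
/- Let R be a prime ring of characteristic different from 2, let ξ, ζ ∈ R, and let (D₁, d₁) and (D₂, d₂) be generalized derivations on R such that the pair (D₁² + D₁∘D₂, d₁² + d₁∘d₂) is a generalized derivation on R. If D₂ is the inner generalized derivation F_{ξ,ζ} : r ↦ ζr + rξ (so that d₂ is the inner derivation t ↦ tξ − ξt) and D₁ ≠ 0, then either D₁ = −F_{ξ,ζ} (and d₁ = −d₂), or ξ lies in the center Z(R) of R. -/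
/-- Herstein-type lemma: in a prime ring of characteristic ≠ 2,
`a x b + b x a = 0` for all `x` forces `a = 0` or `b = 0`. -/
lemma aux_ab {R : Type*} [Ring R]
    (hprime : ∀ x y : R, (∀ r : R, x * r * y = 0) → x = 0 ∨ y = 0)
    (hchar : ∀ x : R, 2 * x = 0 → x = 0)
    (a b : R) (hab : ∀ x : R, a * x * b + b * x * a = 0) : a = 0 ∨ b = 0 := by
  by_cases hb : b = 0
  · exact Or.inr hb
  · left
    have h2 : ∀ x y : R, b * x * (b * y * a - a * y * b) = 0 := by
      intro x y
      have f1 := hab (x * b * y)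
      have f2 : (a * x * b + b * x * a) * (y * b) = 0 := by rw [hab x, zero_mul]
      have comb : b * x * (b * y * a - a * y * b)
          = (a * (x * b * y) * b + b * (x * b * y) * a)
            - (a * x * b + b * x * a) * (y * b) := by noncomm_ring
      rw [comb, f1, f2, sub_zero]
    have h3 : ∀ y : R, b * y * a = a * y * b := by
      intro y
      rcases hprime b (b * y * a - a * y * b) (fun x => h2 x y) with h | h
      · exact absurd h hb
      · exact sub_eq_zero.mp h
    have h4 : ∀ y : R, a * y * b = 0 := by
      intro y
      apply hchar
      have e := hab y
      rw [h3 y] at e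
      rw [two_mul]
      exact e
    rcases hprime a b h4 with h | h
    · exact h
    · exact absurd h hb

theorem stmt12 {R : Type*} [Ring R]
    (hprime : ∀ x y : R, (∀ r : R, x * r * y = 0) → x = 0 ∨ y = 0)
    (hchar : ∀ x : R, 2 * x = 0 → x = 0)
    (ξ ζ : R) (D₁ d₁ D₂ d₂ : R → R)
    (h₁ : IsGenDerivation D₁ d₁) (h₂ : IsGenDerivation D₂ d₂)
    (h : IsGenDerivation (fun x => D₁ (D₁ x) + D₁ (D₂ x)) (fun x => d₁ (d₁ x) + d₁ (d₂ x)))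
    (hD₂ : D₂ = fun r => ζ * r + r * ξ) (hd₂ : d₂ = fun t => t * ξ - ξ * t)
    (hD₁ne : D₁ ≠ 0) :
    ((D₁ = fun r => -(ζ * r + r * ξ)) ∧ d₁ = -d₂) ∨ ξ ∈ Set.center R := by
  obtain ⟨hD₁add, hd₁der, hD₁mul⟩ := h₁
  obtain ⟨hd₁add, hd₁mul⟩ := hd₁der
  obtain ⟨hD₂add, hd₂der, hD₂mul⟩ := h₂
  obtain ⟨hd₂add, hd₂mul⟩ := hd₂der
  obtain ⟨hGadd, hgder, hGmul⟩ := h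
  obtain ⟨hgadd, hgmul⟩ := hgder
  -- the key identity from the generalized-derivation hypothesis
  have key : ∀ x y : R,
      D₁ x * d₁ y + D₁ x * d₁ y + D₂ x * d₁ y + D₁ x * d₂ y = 0 := by
    intro x y
    have e : D₁ (D₁ (x * y)) + D₁ (D₂ (x * y))
        = (D₁ (D₁ x) + D₁ (D₂ x)) * y + x * (d₁ (d₁ y) + d₁ (d₂ y)) := hGmul x y
    rw [hD₁mul x y, hD₂mul x y, hD₁add (D₁ x * y) (x * d₁ y), hD₁add (D₂ x * y) (x * d₂ y),
        hD₁mul (D₁ x) y, hD₁mul x (d₁ y), hD₁mul (D₂ x) y, hD₁mul x (d₂ y)] at e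
    have comb : D₁ x * d₁ y + D₁ x * d₁ y + D₂ x * d₁ y + D₁ x * d₂ y
        = (D₁ (D₁ x) * y + D₁ x * d₁ y + (D₁ x * d₁ y + x * d₁ (d₁ y))
            + (D₁ (D₂ x) * y + D₂ x * d₁ y + (D₁ x * d₂ y + x * d₁ (d₂ y))))
          - ((D₁ (D₁ x) + D₁ (D₂ x)) * y + x * (d₁ (d₁ y) + d₁ (d₂ y))) := by noncomm_ring
    rw [comb]
    exact sub_eq_zero_of_eq e
  -- the same identity for the derivation parts
  have key' : ∀ x y : R,
      d₁ x * d₁ y + d₁ x * d₁ y + d₂ x * d₁ y + d₁ x * d₂ y = 0 := by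
    intro x y
    have e : d₁ (d₁ (x * y)) + d₁ (d₂ (x * y))
        = (d₁ (d₁ x) + d₁ (d₂ x)) * y + x * (d₁ (d₁ y) + d₁ (d₂ y)) := hgmul x y
    rw [hd₁mul x y, hd₂mul x y, hd₁add (d₁ x * y) (x * d₁ y), hd₁add (d₂ x * y) (x * d₂ y),
        hd₁mul (d₁ x) y, hd₁mul x (d₁ y), hd₁mul (d₂ x) y, hd₁mul x (d₂ y)] at e
    have comb : d₁ x * d₁ y + d₁ x * d₁ y + d₂ x * d₁ y + d₁ x * d₂ y
        = (d₁ (d₁ x) * y + d₁ x * d₁ y + (d₁ x * d₁ y + x * d₁ (d₁ y))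
            + (d₁ (d₂ x) * y + d₂ x * d₁ y + (d₁ x * d₂ y + x * d₁ (d₂ y))))
          - ((d₁ (d₁ x) + d₁ (d₂ x)) * y + x * (d₁ (d₁ y) + d₁ (d₂ y))) := by noncomm_ring
    rw [comb]
    exact sub_eq_zero_of_eq e
  -- Posner-style: for each y, (d₁ y + d₂ y) x (d₁ y) + (d₁ y) x (d₁ y + d₂ y) = 0
  have B2 : ∀ y x : R,
      (d₁ y + d₂ y) * x * d₁ y + d₁ y * x * (d₁ y + d₂ y) = 0 := by
    intro y x
    have e1 := key' (y * x) y
    rw [hd₁mul y x, hd₂mul y x] at e1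
    have c2 : y * (d₁ x * d₁ y + d₁ x * d₁ y + d₂ x * d₁ y + d₁ x * d₂ y) = 0 := by
      rw [key' x y, mul_zero]
    have comb : (d₁ y + d₂ y) * x * d₁ y + d₁ y * x * (d₁ y + d₂ y)
        = ((d₁ y * x + y * d₁ x) * d₁ y + (d₁ y * x + y * d₁ x) * d₁ y
            + (d₂ y * x + y * d₂ x) * d₁ y + (d₁ y * x + y * d₁ x) * d₂ y)
          - y * (d₁ x * d₁ y + d₁ x * d₁ y + d₂ x * d₁ y + d₁ x * d₂ y) := by noncomm_ring
    rw [comb, e1, c2, sub_zero]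
  have dich : ∀ y : R, d₁ y + d₂ y = 0 ∨ d₁ y = 0 := fun y =>
    aux_ab hprime hchar (d₁ y + d₂ y) (d₁ y) (B2 y)
  -- global dichotomy
  have glob : (∀ y : R, d₁ y = 0) ∨ (∀ y : R, d₁ y + d₂ y = 0) := by
    by_cases hu : ∀ y : R, d₁ y = 0
    · exact Or.inl hu
    · right
      push_neg at hu
      obtain ⟨y₁, hy₁⟩ := hu
      have hv₁ : d₁ y₁ + d₂ y₁ = 0 := (dich y₁).resolve_right hy₁
      intro y
      rcases dich y with hgood | hz
      · exact hgood
      · rcases dich (y + y₁) with h3 | h3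
        · rw [hd₁add y y₁, hd₂add y y₁] at h3
          have comb : d₁ y + d₂ y
              = (d₁ y + d₁ y₁ + (d₂ y + d₂ y₁)) - (d₁ y₁ + d₂ y₁) := by abel
          rw [comb, h3, hv₁, sub_zero]
        · rw [hd₁add y y₁, hz, zero_add] at h3
          exact absurd h3 hy₁
  rcases glob with hu | hv
  · -- d₁ = 0 : either ξ is central or D₁ = 0, contradiction
    have k2 : ∀ x y : R, D₁ x * d₂ y = 0 := by
      intro x y
      have e := key x y
      rw [hu y] at e
      simpa using e
    have k3 : ∀ x r y : R, D₁ x * r * d₂ y = 0 := by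
      intro x r y
      have e := k2 x (r * y)
      rw [hd₂mul r y, mul_add, ← mul_assoc, k2 x r, zero_mul, zero_add, ← mul_assoc] at e
      exact e
    by_cases hcen : ∀ g : R, g * ξ = ξ * g
    · exact Or.inr (Semigroup.mem_center_iff.mpr hcen)
    · exfalso
      push_neg at hcen
      obtain ⟨g, hg⟩ := hcen
      have hdg : d₂ g ≠ 0 := by
        have : d₂ g = g * ξ - ξ * g := by rw [hd₂]
        rw [this]
        exact sub_ne_zero_of_ne hg
      apply hD₁ne
      funext x
      exact (hprime (D₁ x) (d₂ g) (fun r => k3 x r g)).resolve_right hdg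
  · -- d₁ + d₂ = 0
    have hd2e : ∀ y : R, d₂ y = -(d₁ y) := by
      intro y
      have e := hv y
      rw [eq_neg_iff_add_eq_zero, add_comm]
      exact e
    have k4 : ∀ x y : R, (D₁ x + D₂ x) * d₁ y = 0 := by
      intro x y
      have e := key x y
      rw [hd2e y] at e
      have comb : (D₁ x + D₂ x) * d₁ y
          = D₁ x * d₁ y + D₁ x * d₁ y + D₂ x * d₁ y + D₁ x * -(d₁ y) := by noncomm_ring
      rw [comb]
      exact e
    have k5 : ∀ x r y : R, (D₁ x + D₂ x) * r * d₁ y = 0 := by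
      intro x r y
      have e := k4 x (r * y)
      rw [hd₁mul r y, mul_add, ← mul_assoc, k4 x r, zero_mul, zero_add, ← mul_assoc] at e
      exact e
    by_cases hz : ∀ y : R, d₁ y = 0
    · right
      apply Semigroup.mem_center_iff.mpr
      intro g
      have e : d₂ g = 0 := by rw [hd2e, hz, neg_zero]
      have e2 : g * ξ - ξ * g = 0 := by
        have : d₂ g = g * ξ - ξ * g := by rw [hd₂]
        rw [← this]; exact e
      exact sub_eq_zero.mp e2
    · push_neg at hz
      obtain ⟨y₀, hy₀⟩ := hz
      left
      have hT : ∀ x : R, D₁ x + D₂ x = 0 := fun x =>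
        (hprime (D₁ x + D₂ x) (d₁ y₀) (fun r => k5 x r y₀)).resolve_right hy₀
      constructor
      · funext x
        show D₁ x = -(ζ * x + x * ξ)
        have e := hT x
        have e2 : D₂ x = ζ * x + x * ξ := by rw [hD₂]
        rw [e2] at e
        exact eq_neg_of_add_eq_zero_left e
      · funext y
        show d₁ y = -(d₂ y)
        rw [hd2e, neg_neg]
end

section
/- Let R be a prime ring of characteristic different from 2 and let (D₁, d₁) and (D₂, d₂) be generalized derivations on R such that the pair (D₁² + D₁∘D₂, d₁² + d₁∘d₂) is a generalized derivation on R. If D₁ is a nonzero left centralizer on R (equivalently, d₁ = 0 and D₁ ≠ 0), then D₂ is a left centralizer on R (equivalently, d₂ = 0). -/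
theorem stmt13 {R : Type*} [Ring R]
    (hprime : ∀ x y : R, (∀ r : R, x * r * y = 0) → x = 0 ∨ y = 0)
    (hchar : ∀ x : R, 2 * x = 0 → x = 0)
    (D₁ d₁ D₂ d₂ : R → R)
    (h₁ : IsGenDerivation D₁ d₁) (h₂ : IsGenDerivation D₂ d₂)
    (h : IsGenDerivation (fun x => D₁ (D₁ x) + D₁ (D₂ x)) (fun x => d₁ (d₁ x) + d₁ (d₂ x)))
    (hLC : ∀ x y : R, D₁ (x * y) = D₁ x * y) (hne : D₁ ≠ 0) :
    ∀ x y : R, D₂ (x * y) = D₂ x * y := by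
  -- d₁ = 0
  have hd₁ : ∀ y : R, d₁ y = 0 := by
    intro y
    have h1 := h₁.2.2 1 y
    rw [hLC 1 y] at h1
    have h2 : (1 : R) * d₁ y = 0 := left_eq_add.mp h1
    simpa using h2
  -- key: D₁ x * d₂ y = 0
  have key : ∀ x y : R, D₁ x * d₂ y = 0 := by
    intro x y
    have hF := h.2.2 x y
    simp only [hd₁] at hF
    -- hF : D₁ (D₁ (x*y)) + D₁ (D₂ (x*y)) = (D₁ (D₁ x) + D₁ (D₂ x)) * y + x * (0 + 0)
    have e1 : D₁ (D₁ (x * y)) = D₁ (D₁ x) * y := by rw [hLC x y, hLC]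
    have e2 : D₁ (D₂ (x * y)) = D₁ (D₂ x) * y + D₁ x * d₂ y := by
      rw [h₂.2.2 x y, h₁.1, hLC, hLC]
    rw [e1, e2] at hF
    simp only [add_mul, mul_zero, add_zero, zero_add] at hF
    rw [← add_assoc] at hF
    exact add_eq_left.mp hF
  -- get a witness with D₁ x₀ ≠ 0
  obtain ⟨x₀, hx₀⟩ : ∃ x : R, D₁ x ≠ 0 := by
    by_contra hc
    push_neg at hc
    exact hne (funext hc)
  have hd₂ : ∀ y : R, d₂ y = 0 := by
    intro y
    have := hprime (D₁ x₀) (d₂ y) (fun r => by rw [← hLC x₀ r]; exact key _ y)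
    exact this.resolve_left hx₀
  intro x y
  rw [h₂.2.2 x y, hd₂ y, mul_zero, add_zero]
end

section
/- Let R be a prime ring of characteristic different from 2 and let (D₁, d₁) and (D₂, d₂) be generalized derivations on R such that the pair (D₁² + D₁∘D₂, d₁² + d₁∘d₂) is a generalized derivation on R. If D₂ is a left centralizer on R (equivalently, d₂ = 0), then D₁ is a left centralizer on R (equivalently, d₁ = 0). -/
theorem stmt14 {R : Type*} [Ring R]
    (hprime : ∀ x y : R, (∀ r : R, x * r * y = 0) → x = 0 ∨ y = 0)
    (hchar : ∀ x : R, 2 * x = 0 → x = 0)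
    (D₁ d₁ D₂ d₂ : R → R)
    (h₁ : IsGenDerivation D₁ d₁) (h₂ : IsGenDerivation D₂ d₂)
    (h : IsGenDerivation (fun x => D₁ (D₁ x) + D₁ (D₂ x)) (fun x => d₁ (d₁ x) + d₁ (d₂ x)))
    (hLC : ∀ x y : R, D₂ (x * y) = D₂ x * y) :
    ∀ x y : R, D₁ (x * y) = D₁ x * y := by
  obtain ⟨hD1add, ⟨hd1add, hd1mul⟩, hD1mul⟩ := h₁
  obtain ⟨hD2add, ⟨hd2add, hd2mul⟩, hD2mul⟩ := h₂
  obtain ⟨hFadd, ⟨hfadd, hfmul⟩, hFmul⟩ := h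
  -- step 1: d₂ = 0
  have hxd2 : ∀ x y : R, x * d₂ y = 0 := by
    intro x y
    have h0 : D₂ x * y = D₂ x * y + x * d₂ y := by rw [← hD2mul, hLC]
    exact (left_eq_add.mp h0)
  have hd2 : ∀ y : R, d₂ y = 0 := by
    intro y
    rcases hprime (d₂ y) (d₂ y) (fun r => hxd2 (d₂ y * r) y) with h' | h' <;> exact h'
  have hd10 : d₁ 0 = 0 := by
    have h0 := hd1add 0 0
    rw [add_zero] at h0
    exact left_eq_add.mp h0
  -- step 2: key relation (2 D₁ x + D₂ x) * d₁ y = 0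
  have key : ∀ x y : R, (2 * D₁ x + D₂ x) * d₁ y = 0 := by
    intro x y
    have h0 := hFmul x y
    simp only [hLC, hD1mul, hD1add, hd2, hd10] at h0
    rw [← sub_eq_zero_of_eq h0]
    noncomm_ring
  have key2 : ∀ x z y : R, (2 * D₁ x + D₂ x) * z * d₁ y = 0 := by
    intro x z y
    have h0 := key x (z * y)
    rw [hd1mul, mul_add, ← mul_assoc, key x z, zero_mul, zero_add, ← mul_assoc] at h0
    exact h0
  -- step 3: d₁ = 0
  have hd1 : ∀ y : R, d₁ y = 0 := by
    intro y
    by_contra hne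
    have hA : ∀ x : R, 2 * D₁ x + D₂ x = 0 := fun x =>
      (hprime _ _ (fun r => key2 x r y)).resolve_right hne
    have hxd1 : ∀ x z : R, x * d₁ z = 0 := by
      intro x z
      have e1 := hA (x * z)
      rw [hD1mul, hLC] at e1
      have e2 : (2 * D₁ x + D₂ x) * z = 0 := by rw [hA x, zero_mul]
      have hsub : 2 * (x * d₁ z) =
          (2 * (D₁ x * z + x * d₁ z) + D₂ x * z) - (2 * D₁ x + D₂ x) * z := by noncomm_ring
      apply hchar
      rw [hsub, e1, e2, sub_self]
    exact hne ((hprime (d₁ y) (d₁ y) (fun r => hxd1 (d₁ y * r) y)).elim id id)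
  intro x y
  rw [hD1mul, hd1, mul_zero, add_zero]
end

section
/- Let R be a prime ring of characteristic different from 2, let ξ ∈ R, and let (D₁, d₁) and (D₂, d₂) be generalized derivations on R such that the pair (D₁² + D₁∘D₂, d₁² + d₁∘d₂) is a generalized derivation on R. If D₁ is the right multiplication map R_ξ : r ↦ rξ (so that d₁ is the inner derivation t ↦ tξ − ξt), then either D₂ = R_{−ξ} (with d₂ = −d₁), or ξ lies in the center Z(R) of R. -/
theorem stmt15 {R : Type*} [Ring R]
    (hprime : ∀ x y : R, (∀ r : R, x * r * y = 0) → x = 0 ∨ y = 0)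
    (hchar : ∀ x : R, 2 * x = 0 → x = 0)
    (ξ : R) (D₁ d₁ D₂ d₂ : R → R)
    (h₁ : IsGenDerivation D₁ d₁) (h₂ : IsGenDerivation D₂ d₂)
    (h : IsGenDerivation (fun x => D₁ (D₁ x) + D₁ (D₂ x)) (fun x => d₁ (d₁ x) + d₁ (d₂ x)))
    (hD₁ : D₁ = fun r => r * ξ) (hd₁ : d₁ = fun t => t * ξ - ξ * t) :
    ((D₂ = fun r => r * (-ξ)) ∧ d₂ = -d₁) ∨ ξ ∈ Set.center R := by
  subst hD₁ hd₁
  obtain ⟨-, ⟨-, hd2mul⟩, hD2mul⟩ := h₂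
  obtain ⟨-, -, hmul⟩ := h
  simp only at hmul
  -- (*)
  have hstar : ∀ x y : R,
      D₂ x * (y*ξ - ξ*y) + 2*(x*(ξ*(y*ξ - ξ*y))) + x*(ξ*d₂ y) = 0 := by
    intro x y
    have h1 := hmul x y
    rw [hD2mul x y] at h1
    linear_combination (norm := noncomm_ring) h1
  obtain ⟨a, ha⟩ : ∃ a : R, a = D₂ 1 := ⟨_, rfl⟩
  have hDa : ∀ y : R, D₂ y = a * y + d₂ y := by
    intro y
    have h1 := hD2mul 1 y
    simp only [one_mul] at h1
    rw [h1, ha]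
  -- (**)
  have hss : ∀ y : R, (a + 2*ξ)*(y*ξ - ξ*y) + ξ*d₂ y = 0 := by
    intro y
    have h1 := hstar 1 y
    rw [← ha] at h1
    linear_combination (norm := noncomm_ring) h1
  -- (***)
  have hggg : ∀ x y : R, (a*x - x*a + d₂ x) * (y*ξ - ξ*y) = 0 := by
    intro x y
    have h1 := hstar x y
    rw [hDa x] at h1
    linear_combination (norm := noncomm_ring) h1 - x * (hss y)
  by_cases hcen : ∀ y : R, y * ξ = ξ * y
  · exact Or.inr (Semigroup.mem_center_iff.mpr hcen)
  push_neg at hcen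
  obtain ⟨y₀, hy₀'⟩ := hcen
  have hy₀ : y₀*ξ - ξ*y₀ ≠ 0 := sub_ne_zero.mpr hy₀'
  -- g ≡ 0, i.e. d₂ x = x*a - a*x
  have hg0 : ∀ x : R, a*x - x*a + d₂ x = 0 := by
    intro x
    have key : ∀ z : R, (a*x - x*a + d₂ x) * z * (y₀*ξ - ξ*y₀) = 0 := by
      intro z
      have h1 := hggg (x*z) y₀
      rw [hd2mul x z] at h1
      have h2 := hggg z y₀
      linear_combination (norm := noncomm_ring) h1 - x * h2
    rcases hprime _ _ key with h' | h'
    · exact h'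
    · exact absurd h' hy₀
  have hd2 : ∀ x : R, d₂ x = x*a - a*x := by
    intro x
    linear_combination (norm := noncomm_ring) hg0 x
  obtain ⟨b, hb⟩ : ∃ b : R, b = a + ξ := ⟨_, rfl⟩
  have hab : a = b - ξ := by rw [hb]; noncomm_ring
  -- (†)
  have hdag : ∀ y : R, b*(y*ξ - ξ*y) = ξ*(b*y - y*b) := by
    intro y
    have h1 := hss y
    rw [hd2 y, hab] at h1
    linear_combination (norm := noncomm_ring) h1
  -- (‡)
  have hddag : ∀ y z : R, b*(y*(z*ξ - ξ*z)) = ξ*(y*(b*z - z*b)) := by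
    intro y z
    linear_combination (norm := noncomm_ring) hdag (y*z) - (hdag y) * z
  -- (A)
  have hA : ∀ t z : R, (b*t - t*b)*(z*ξ - ξ*z) + (t*ξ - ξ*t)*(b*z - z*b) = 0 := by
    intro t z
    linear_combination (norm := noncomm_ring) hddag t z - t * (hdag z)
  -- (B)
  have hB : ∀ t u z : R,
      (b*t - t*b)*u*(z*ξ - ξ*z) + (t*ξ - ξ*t)*u*(b*z - z*b) = 0 := by
    intro t u z
    linear_combination (norm := noncomm_ring) hA (t*u) z - t * (hA u z)
  -- char trick
  have htrick : ∀ t u w z : R,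
      (t*ξ - ξ*t)*u*((b*z - z*b)*(w*(b*z - z*b))) = 0 := by
    intro t u w z
    apply hchar
    have h1 := hB t (u*((b*z - z*b)*w)) z
    have h2 := hB z w z
    have h3 := hB t u z
    linear_combination (norm := noncomm_ring)
      h1 - (b*t - t*b)*u*h2 + h3*(w*(b*z - z*b))
  have hδ0 : ∀ z : R, b*z - z*b = 0 := by
    intro z
    have key2 : ∀ w : R, (b*z - z*b) * w * (b*z - z*b) = 0 := by
      intro w
      have key : ∀ u : R, (y₀*ξ - ξ*y₀) * u * ((b*z - z*b)*(w*(b*z - z*b))) = 0 := by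
        intro u
        calc (y₀*ξ - ξ*y₀) * u * ((b*z - z*b)*(w*(b*z - z*b)))
            = (y₀*ξ - ξ*y₀)*u*((b*z - z*b)*(w*(b*z - z*b))) := by noncomm_ring
          _ = 0 := htrick y₀ u w z
      rcases hprime _ _ key with h' | h'
      · exact absurd h' hy₀
      · calc (b*z - z*b) * w * (b*z - z*b)
            = (b*z - z*b)*(w*(b*z - z*b)) := by noncomm_ring
          _ = 0 := h'
    rcases hprime _ _ key2 with h' | h'
    · exact h'
    · exact h'
  have hb0 : b = 0 := by
    have key : ∀ t : R, b * t * (y₀*ξ - ξ*y₀) = 0 := by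
      intro t
      have h1 := hddag t y₀
      rw [hδ0 y₀] at h1
      calc b * t * (y₀*ξ - ξ*y₀) = b*(t*(y₀*ξ - ξ*y₀)) := by noncomm_ring
        _ = ξ*(t*0) := h1
        _ = 0 := by noncomm_ring
    rcases hprime _ _ key with h' | h'
    · exact h'
    · exact absurd h' hy₀
  have ha' : a = -ξ := by rw [hab, hb0, zero_sub]
  left
  constructor
  · funext r
    rw [hDa r, hd2 r, ha']
    noncomm_ring
  · funext t
    rw [Pi.neg_apply]
    rw [hd2 t, ha']
    noncomm_ring
end

section
/- Let R be a prime ring of characteristic different from 2, let ξ ∈ R, and let (D₁, d₁) and (D₂, d₂) be generalized derivations on R such that the pair (D₁² + D₁∘D₂, d₁² + d₁∘d₂) is a generalized derivation on R. If D₂ is the right multiplication map R_ξ : r ↦ rξ (so that d₂ is the inner derivation t ↦ tξ − ξt) and D₁ ≠ 0, then either D₁ = R_{−ξ} (with d₁ = −d₂), or ξ lies in the center Z(R) of R. -/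
theorem stmt16 {R : Type*} [Ring R]
    (hprime : ∀ x y : R, (∀ r : R, x * r * y = 0) → x = 0 ∨ y = 0)
    (hchar : ∀ x : R, 2 * x = 0 → x = 0)
    (ξ : R) (D₁ d₁ D₂ d₂ : R → R)
    (h₁ : IsGenDerivation D₁ d₁) (h₂ : IsGenDerivation D₂ d₂)
    (h : IsGenDerivation (fun x => D₁ (D₁ x) + D₁ (D₂ x)) (fun x => d₁ (d₁ x) + d₁ (d₂ x)))
    (hD₂ : D₂ = fun r => r * ξ) (hd₂ : d₂ = fun t => t * ξ - ξ * t)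
    (hD₁ne : D₁ ≠ 0) :
    ((D₁ = fun r => r * (-ξ)) ∧ d₁ = -d₂) ∨ ξ ∈ Set.center R := by
  subst hD₂ hd₂
  obtain ⟨hD₁add, ⟨hd₁add, hd₁mul⟩, hD₁mul⟩ := h₁
  have hd₁sub : ∀ x y : R, d₁ (x - y) = d₁ x - d₁ y := by
    intro x y
    have h0 := hd₁add (x - y) y
    rw [sub_add_cancel] at h0
    rw [eq_sub_iff_add_eq, ← h0]
  -- the key functional identity coming from `h`
  have star : ∀ x y : R, 2*(D₁ x * d₁ y) + D₁ x * (y*ξ - ξ*y) + x*ξ*d₁ y = 0 := by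
    intro x y
    have hF := h.2.2 x y
    simp only [hD₁mul, hD₁add, hd₁sub, hd₁add, hd₁mul] at hF
    linear_combination (norm := noncomm_ring) hF
  have sstar : ∀ x y z : R,
      2*(D₁ x * (y * d₁ z)) + D₁ x * (y*(z*ξ - ξ*z)) + x*ξ*(y*d₁ z) = 0 := by
    intro x y z
    have S1 := star x (y*z)
    rw [hd₁mul y z] at S1
    have S2 := star x y
    linear_combination (norm := noncomm_ring) S1 - S2 * z
  have hdec : ∀ x : R, D₁ x = D₁ 1 * x + d₁ x := by
    intro x
    have h0 := hD₁mul 1 x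
    rwa [one_mul, one_mul] at h0
  have sA : ∀ t y z : R,
      d₁ t * y * (d₁ z + (z*ξ - ξ*z)) + (d₁ t + (t*ξ - ξ*t)) * y * d₁ z = 0 := by
    intro t y z
    have S1 := sstar t y z
    rw [hdec t] at S1
    have S2 := sstar 1 (t*y) z
    linear_combination (norm := noncomm_ring) S1 - S2
  have sB : ∀ y z : R,
      (D₁ 1 + ξ) * y * d₁ z + D₁ 1 * y * (d₁ z + (z*ξ - ξ*z)) = 0 := by
    intro y z
    have S := sstar 1 y z
    linear_combination (norm := noncomm_ring) S
  have hx0 : ∃ x : R, D₁ x ≠ 0 := by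
    by_contra h'
    push_neg at h'
    exact hD₁ne (funext fun x => by simp [h' x])
  by_cases hd1 : ∀ z : R, d₁ z = 0
  · -- d₁ ≡ 0 forces ξ central
    right
    have hcomm : ∀ z : R, z * ξ = ξ * z := by
      intro z
      obtain ⟨x₀, hx₀⟩ := hx0
      have key : ∀ y : R, D₁ x₀ * y * (z*ξ - ξ*z) = 0 := by
        intro y
        have S := sstar x₀ y z
        rw [hd1 z] at S
        linear_combination (norm := noncomm_ring) S
      rcases hprime _ _ key with h' | h'
      · exact absurd h' hx₀
      · exact sub_eq_zero.mp h'
    refine ⟨fun g => (hcomm g).symm, ?_, ?_⟩ <;> intros <;>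
      simp only [← mul_assoc, mul_assoc, hcomm] <;> rw [← mul_assoc, ← mul_assoc, hcomm]
  · push_neg at hd1
    obtain ⟨z₀, hz₀⟩ := hd1
    have key2 : ∀ t t' y y' z : R,
        (d₁ t * y * (d₁ t' + (t'*ξ - ξ*t')) - (d₁ t + (t*ξ - ξ*t)) * y * d₁ t') * y' *
          (d₁ z + (z*ξ - ξ*z)) = 0 := by
      intro t t' y y' z
      have S1 := sA t (y * (d₁ t' + (t'*ξ - ξ*t')) * y') z
      have S2 := sA t' y' z
      linear_combination (norm := noncomm_ring)
        S1 - (d₁ t + (t*ξ - ξ*t)) * y * S2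
    have he : ∀ t : R, d₁ t + (t*ξ - ξ*t) = 0 := by
      intro t
      by_contra het
      have h3 : ∀ t' y : R, (d₁ t + (t*ξ - ξ*t)) * y * d₁ t' = 0 := by
        intro t' y
        rcases hprime (d₁ t * y * (d₁ t' + (t'*ξ - ξ*t')) - (d₁ t + (t*ξ - ξ*t)) * y * d₁ t')
          (d₁ t + (t*ξ - ξ*t)) (fun y' => key2 t t' y y' t) with h4 | h4
        · have S := sA t y t'
          apply hchar
          linear_combination (norm := noncomm_ring) S - h4
        · exact absurd h4 het
      rcases hprime _ _ (fun y => h3 z₀ y) with h' | h'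
      · exact absurd h' het
      · exact absurd h' hz₀
    have hca : D₁ 1 + ξ = 0 := by
      have h5 : ∀ y : R, (D₁ 1 + ξ) * y * d₁ z₀ = 0 := by
        intro y
        have S := sB y z₀
        rw [he z₀] at S
        linear_combination (norm := noncomm_ring) S
      rcases hprime _ _ h5 with h' | h'
      · exact h'
      · exact absurd h' hz₀
    left
    constructor
    · funext r
      show D₁ r = r * (-ξ)
      rw [hdec r]
      linear_combination (norm := noncomm_ring) he r + hca * r
    · funext t
      show d₁ t = -(t * ξ - ξ * t)
      linear_combination (norm := noncomm_ring) he t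
end
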